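/- arXiv:2302.09485 — 7 statements merged into one kernel-verified Lean document; each statement's English description precedes it below -/
import Mathlib

section
/- Let $W$ be a finite Weyl group, and let $\mathrm{QBG}(W)$ be its quantum Bruhat graph. Let $v, w \in W$ and let $\mathbf{p}$ be a shortest-length directed path from $v$ to $w$ in $\mathrm{QBG}(W)$. Then all edges of $\mathbf{p}$ are Bruhat edges if and only if $v \le w$ in the Bruhat order on $W$. -/
namespace Stmt0

/-- Data of the quantum Bruhat graph of a finite Weyl group `W`:
a set `Pos` of positive roots, the reflection `s_α ∈ W` for each positive root,
the length function `ℓ`, and the pairing `⟨ρ, α^∨⟩` (a positive integer). -/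
structure QBGData (W : Type*) [Group W] where
  Pos : Type*
  refl : Pos → W
  len : W → ℕ
  rhoPair : Pos → ℕ
  rhoPair_pos : ∀ α, 1 ≤ rhoPair α

variable {W : Type*} [Group W] (d : QBGData W)

/-- A Bruhat edge `x → y = x s_α` of `QBG(W)`: `ℓ(y) = ℓ(x) + 1`. -/
def BruhatEdge (x y : W) : Prop :=
  ∃ α, y = x * d.refl α ∧ d.len y = d.len x + 1

/-- A quantum edge `x → y = x s_α` of `QBG(W)`: `ℓ(y) = ℓ(x) + 1 - 2⟨ρ,α^∨⟩`. -/
def QuantumEdge (x y : W) : Prop :=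
  ∃ α, y = x * d.refl α ∧ d.len y + 2 * d.rhoPair α = d.len x + 1

/-- An edge of the quantum Bruhat graph. -/
def Edge (x y : W) : Prop := BruhatEdge d x y ∨ QuantumEdge d x y

/-- `IsPath d R v p w`: the list `p` of vertices is a directed path from `v` to `w`
whose consecutive steps are related by `R`; its length is `p.length`. -/
def IsPath (R : W → W → Prop) (v : W) (p : List W) (w : W) : Prop :=
  List.Chain R v p ∧ (v :: p).getLast (List.cons_ne_nil v p) = w

/-- The Bruhat order: `v ≤ w` iff there is a directed path of Bruhat edges
from `v` to `w`. -/
def bruhatLE (v w : W) : Prop := ∃ p, IsPath (BruhatEdge d) v p w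

lemma chain_bruhat_len : ∀ (p : List W) (v : W), List.Chain (BruhatEdge d) v p →
    d.len ((v :: p).getLast (List.cons_ne_nil v p)) = d.len v + p.length
  | [], v, _ => by simp
  | a :: t, v, h => by
    obtain ⟨hva, ht⟩ := List.chain_cons.mp h
    obtain ⟨α, _, hlen⟩ := hva
    rw [List.getLast_cons (List.cons_ne_nil a t), chain_bruhat_len t a ht]
    simp [hlen]; ring

lemma chain_edge_lt : ∀ (p : List W) (v : W), List.Chain (Edge d) v p →
    ¬ List.Chain (BruhatEdge d) v p →
    d.len ((v :: p).getLast (List.cons_ne_nil v p)) + 2 ≤ d.len v + p.length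
  | [], v, _, hb => absurd List.Chain.nil hb
  | a :: t, v, h, hb => by
    obtain ⟨hva, ht⟩ := List.chain_cons.mp h
    rw [List.getLast_cons (List.cons_ne_nil a t)]
    by_cases hB : BruhatEdge d v a
    · have hbt : ¬ List.Chain (BruhatEdge d) a t := fun hc => hb (List.chain_cons.mpr ⟨hB, hc⟩)
      have := chain_edge_lt t a ht hbt
      obtain ⟨α, _, hlen⟩ := hB
      simp only [List.length_cons]
      omega
    · rcases hva with hB' | ⟨α, _, hlen⟩
      · exact absurd hB' hB
      have hpos := d.rhoPair_pos α
      have hle : d.len ((a :: t).getLast (List.cons_ne_nil a t)) ≤ d.len a + t.length := by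
        by_cases hbt : List.Chain (BruhatEdge d) a t
        · exact (chain_bruhat_len d t a hbt).le
        · have := chain_edge_lt t a ht hbt; omega
      simp only [List.length_cons]
      omega

/-- Let `p` be a shortest-length directed path from `v` to `w` in `QBG(W)`.
Then all edges of `p` are Bruhat edges iff `v ≤ w` in the Bruhat order. -/
theorem shortest_path_bruhat_iff (v w : W) (p : List W)
    (hp : IsPath (Edge d) v p w)
    (hshort : ∀ q : List W, IsPath (Edge d) v q w → p.length ≤ q.length) :
    List.Chain (BruhatEdge d) v p ↔ bruhatLE d v w := by
  constructor
  · intro hch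
    exact ⟨p, hch, hp.2⟩
  · rintro ⟨q, hqc, hqlast⟩
    by_contra hb
    have hq : d.len w = d.len v + q.length := by
      have := chain_bruhat_len d q v hqc
      rwa [hqlast] at this
    have hlt : d.len w + 2 ≤ d.len v + p.length := by
      have := chain_edge_lt d p v hp.1 hb
      rwa [hp.2] at this
    have hshort' := hshort q ⟨List.Chain.imp (fun _ _ h => Or.inl h) hqc, hqlast⟩
    omega

end Stmt0
end

section
/- Let $W = S_{n+1}$ be the symmetric group with simple reflections $s_1, \ldots, s_n$, and let $K \subset \{1, \ldots, n\}$. Let $m \in \{1,\ldots,n\} \setminus K$, let $w \in W$ be a minimal-length coset representative for $W/W_{I \setminus \{m\}}$ that also lies in $W_{I \setminus K}$, and let $v \in W_K$. Then the minimum element (in Bruhat order) of the set $\{ y \in w W_{I \setminus \{m\}} \mid y \ge v \}$ equals $wv$. -/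
namespace Stmt1

/-- The simple transposition `s_i = (i, i+1)` of `S_{n+1} ⊂ Perm ℕ`. -/
def s (i : ℕ) : Equiv.Perm ℕ := Equiv.swap i (i + 1)

/-- The number of inversions of `w` among the letters `1, …, n+1`. -/
def len (n : ℕ) (w : Equiv.Perm ℕ) : ℕ :=
  ((Finset.Icc 1 (n + 1) ×ˢ Finset.Icc 1 (n + 1)).filter
    (fun q => q.1 < q.2 ∧ w q.2 < w q.1)).card

/-- The standard parabolic subgroup `W_J` generated by `{s_i ∣ i ∈ J}`. -/
def parab (J : Finset ℕ) : Subgroup (Equiv.Perm ℕ) :=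
  Subgroup.closure (s '' J)

/-- The Bruhat order on `S_{n+1}`: the reflexive-transitive closure of
`x < x·t` for a transposition `t` with `ℓ(x·t) > ℓ(x)`. -/
def bruhatLE (n : ℕ) : Equiv.Perm ℕ → Equiv.Perm ℕ → Prop :=
  Relation.ReflTransGen (fun x y => ∃ i ∈ Finset.Icc 1 (n + 1), ∃ j ∈ Finset.Icc 1 (n + 1),
    i ≠ j ∧ y = x * Equiv.swap i j ∧ len n x < len n y)

/-- `w` is a minimal-length coset representative for `W/W_J`. -/
def IsMinRep (n : ℕ) (J : Finset ℕ) (w : Equiv.Perm ℕ) : Prop :=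
  ∀ u ∈ parab J, len n w ≤ len n (w * u)

/-! ### Basic lemmas on `s` -/

lemma s_mul_s (j : ℕ) : s j * s j = 1 := Equiv.swap_mul_self _ _

lemma s_apply (j p : ℕ) : s j p = if p = j then j + 1 else if p = j + 1 then j else p := by
  simp [s, Equiv.swap_apply_def]

lemma s_flip {i a b : ℕ} (hab : a < b) (h : ¬ s i a < s i b) : a = i ∧ b = i + 1 := by
  simp only [s_apply] at h
  split_ifs at h <;> omega

lemma s_mono {i a b : ℕ} (hab : a < b) (h : ¬(a = i ∧ b = i + 1)) : s i a < s i b := by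
  by_contra hc
  exact h (s_flip hab hc)

@[simp] lemma _root_.Equiv.Perm.apply_inv_self {α : Type*} (f : Equiv.Perm α) (x : α) :
    f (f⁻¹ x) = x := f.apply_symm_apply x

@[simp] lemma _root_.Equiv.Perm.inv_apply_self {α : Type*} (f : Equiv.Perm α) (x : α) :
    f⁻¹ (f x) = x := f.symm_apply_apply x

/-! ### The predicate `PT`: permutations of `{1, …, n+1}` fixing everything else -/

def PT (n : ℕ) (x : Equiv.Perm ℕ) : Prop :=
  ∀ p, (p ∈ Finset.Icc 1 (n + 1) → x p ∈ Finset.Icc 1 (n + 1)) ∧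
    (p ∉ Finset.Icc 1 (n + 1) → x p = p)

lemma PT.mem {n x} (h : PT n x) {p} (hp : p ∈ Finset.Icc 1 (n + 1)) :
    x p ∈ Finset.Icc 1 (n + 1) := (h p).1 hp

lemma PT.fix {n x} (h : PT n x) {p} (hp : p ∉ Finset.Icc 1 (n + 1)) : x p = p := (h p).2 hp

lemma PT.mem_iff {n x} (h : PT n x) {p} :
    x p ∈ Finset.Icc 1 (n + 1) ↔ p ∈ Finset.Icc 1 (n + 1) := by
  constructor
  · intro hx
    by_contra hp
    rw [h.fix hp] at hx
    exact hp hx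
  · exact h.mem

lemma PT.one {n : ℕ} : PT n 1 := fun p => ⟨fun hp => hp, fun _ => rfl⟩

lemma PT.mul {n x y} (hx : PT n x) (hy : PT n y) : PT n (x * y) := by
  intro p
  constructor
  · intro hp
    exact hx.mem (hy.mem hp)
  · intro hp
    show x (y p) = p
    rw [hy.fix hp, hx.fix hp]

lemma PT.inv {n x} (h : PT n x) : PT n x⁻¹ := by
  intro p
  constructor
  · intro hp
    by_contra hq
    have := h.fix hq
    have : x⁻¹ p = p := by
      have h2 : x (x⁻¹ p) = x⁻¹ p := this
      have h3 : x (x⁻¹ p) = p := Equiv.Perm.apply_inv_self x p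
      omega
    rw [this] at hq
    exact hq hp
  · intro hp
    have := h.fix hp
    conv_lhs => rw [← this]
    exact Equiv.Perm.inv_apply_self x p

lemma PT.swap {n a b} (ha : a ∈ Finset.Icc 1 (n + 1)) (hb : b ∈ Finset.Icc 1 (n + 1)) :
    PT n (Equiv.swap a b) := by
  intro p
  constructor
  · intro hp
    rw [Equiv.swap_apply_def]
    split_ifs <;> assumption
  · intro hp
    apply Equiv.swap_apply_of_ne_of_ne
    · rintro rfl; exact hp ha
    · rintro rfl; exact hp hb

lemma PT.s {n j} (hj : j ∈ Finset.Icc 1 n) : PT n (s j) := by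
  simp only [Finset.mem_Icc] at hj
  exact PT.swap (by simp [Finset.mem_Icc]; omega) (by simp [Finset.mem_Icc]; omega)


/-! ### The product formula -/

def cross (n : ℕ) (x y : Equiv.Perm ℕ) : Finset (ℕ × ℕ) :=
  ((Finset.Icc 1 (n + 1)) ×ˢ (Finset.Icc 1 (n + 1))).filter
    (fun q => q.1 < q.2 ∧ y⁻¹ q.2 < y⁻¹ q.1 ∧ x q.2 < x q.1)

lemma len_inv_filter {n : ℕ} {y : Equiv.Perm ℕ} (hy : PT n y) :
    len n y = (((Finset.Icc 1 (n + 1)) ×ˢ (Finset.Icc 1 (n + 1))).filter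
      (fun q => q.1 < q.2 ∧ y⁻¹ q.2 < y⁻¹ q.1)).card := by
  apply Finset.card_bij' (fun q _ => (y q.2, y q.1)) (fun q _ => (y⁻¹ q.2, y⁻¹ q.1))
  · rintro ⟨p, q⟩ hpq
    simp only [Finset.mem_filter, Finset.mem_product] at hpq ⊢
    obtain ⟨⟨hp, hq⟩, h1, h2⟩ := hpq
    refine ⟨⟨hy.mem hq, hy.mem hp⟩, h2, ?_⟩
    simpa using h1
  · rintro ⟨a, b⟩ hab
    simp only [Finset.mem_filter, Finset.mem_product] at hab ⊢
    obtain ⟨⟨ha, hb⟩, h1, h2⟩ := hab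
    refine ⟨⟨hy.inv.mem hb, hy.inv.mem ha⟩, h2, ?_⟩
    simpa using h1
  · rintro ⟨p, q⟩ _; simp
  · rintro ⟨a, b⟩ _; simp

lemma len_mul_formula {n : ℕ} {x y : Equiv.Perm ℕ} (hx : PT n x) (hy : PT n y) :
    len n (x * y) + 2 * (cross n x y).card = len n x + len n y := by
  classical
  set A := ((Finset.Icc 1 (n + 1)) ×ˢ (Finset.Icc 1 (n + 1))).filter (fun q => q.1 < q.2 ∧ (x * y) q.2 < (x * y) q.1) with hA
  set A1 := A.filter (fun q => y q.1 < y q.2) with hA1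
  set A2 := A.filter (fun q => ¬ y q.1 < y q.2) with hA2
  set B1 := ((Finset.Icc 1 (n + 1)) ×ˢ (Finset.Icc 1 (n + 1))).filter (fun q => q.1 < q.2 ∧ y⁻¹ q.1 < y⁻¹ q.2 ∧ x q.2 < x q.1) with hB1
  set B2 := ((Finset.Icc 1 (n + 1)) ×ˢ (Finset.Icc 1 (n + 1))).filter (fun q => q.1 < q.2 ∧ y⁻¹ q.2 < y⁻¹ q.1 ∧ x q.1 < x q.2) with hB2
  have hAsplit : A1.card + A2.card = A.card :=
    Finset.card_filter_add_card_filter_not _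
  have hA1B1 : A1.card = B1.card := by
    apply Finset.card_bij' (fun q _ => (y q.1, y q.2)) (fun q _ => (y⁻¹ q.1, y⁻¹ q.2))
    · rintro ⟨p, q⟩ hpq
      simp only [hA1, hA, hB1, Finset.mem_filter, Finset.mem_product] at hpq ⊢
      obtain ⟨⟨⟨hp, hq⟩, h1, h2⟩, h3⟩ := hpq
      exact ⟨⟨hy.mem hp, hy.mem hq⟩, h3, by simpa using h1, h2⟩
    · rintro ⟨a, b⟩ hab
      simp only [hA1, hA, hB1, Finset.mem_filter, Finset.mem_product] at hab ⊢
      obtain ⟨⟨ha, hb⟩, h1, h2, h3⟩ := hab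
      refine ⟨⟨⟨hy.inv.mem ha, hy.inv.mem hb⟩, h2, ?_⟩, by simpa using h1⟩
      show x (y (y⁻¹ b)) < x (y (y⁻¹ a))
      simpa using h3
    · rintro ⟨p, q⟩ _; simp
    · rintro ⟨a, b⟩ _; simp
  have hA2B2 : A2.card = B2.card := by
    apply Finset.card_bij' (fun q _ => (y q.2, y q.1)) (fun q _ => (y⁻¹ q.2, y⁻¹ q.1))
    · rintro ⟨p, q⟩ hpq
      simp only [hA2, hA, hB2, Finset.mem_filter, Finset.mem_product] at hpq ⊢
      obtain ⟨⟨⟨hp, hq⟩, h1, h2⟩, h3⟩ := hpq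
      have hne : y p ≠ y q := fun h => by
        have := y.injective h; omega
      refine ⟨⟨hy.mem hq, hy.mem hp⟩, by omega, by simpa using h1, h2⟩
    · rintro ⟨a, b⟩ hab
      simp only [hA2, hA, hB2, Finset.mem_filter, Finset.mem_product] at hab ⊢
      obtain ⟨⟨ha, hb⟩, h1, h2, h3⟩ := hab
      refine ⟨⟨⟨hy.inv.mem hb, hy.inv.mem ha⟩, h2, ?_⟩, ?_⟩
      · show x (y (y⁻¹ a)) < x (y (y⁻¹ b))
        simpa using h3
      · have : y (y⁻¹ b) = b := by simp
        have : y (y⁻¹ a) = a := by simp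
        omega
    · rintro ⟨p, q⟩ _; simp
    · rintro ⟨a, b⟩ _; simp
  have hxsplit : len n x = B1.card + (cross n x y).card := by
    have h := Finset.card_filter_add_card_filter_not
      (s := ((Finset.Icc 1 (n + 1)) ×ˢ (Finset.Icc 1 (n + 1))).filter (fun q => q.1 < q.2 ∧ x q.2 < x q.1))
      (p := fun q => y⁻¹ q.1 < y⁻¹ q.2)
    have e1 : (((Finset.Icc 1 (n + 1)) ×ˢ (Finset.Icc 1 (n + 1))).filter (fun q => q.1 < q.2 ∧ x q.2 < x q.1)).filter
        (fun q => y⁻¹ q.1 < y⁻¹ q.2) = B1 := by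
      ext ⟨p, q⟩
      simp only [hB1, Finset.mem_filter, Finset.mem_product]
      tauto
    have e2 : (((Finset.Icc 1 (n + 1)) ×ˢ (Finset.Icc 1 (n + 1))).filter (fun q => q.1 < q.2 ∧ x q.2 < x q.1)).filter
        (fun q => ¬ y⁻¹ q.1 < y⁻¹ q.2) = cross n x y := by
      ext ⟨p, q⟩
      simp only [cross, Finset.mem_filter, Finset.mem_product]
      constructor
      · rintro ⟨⟨hm, h1, h2⟩, h3⟩
        have : y⁻¹ p ≠ y⁻¹ q := fun h => by have := y⁻¹.injective h; omega
        exact ⟨hm, h1, by omega, h2⟩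
      · rintro ⟨hm, h1, h2, h3⟩
        exact ⟨⟨hm, h1, h3⟩, by omega⟩
    rw [e1, e2] at h
    rw [len]; omega
  have hysplit : len n y = B2.card + (cross n x y).card := by
    have hli := len_inv_filter hy
    have h := Finset.card_filter_add_card_filter_not
      (s := ((Finset.Icc 1 (n + 1)) ×ˢ (Finset.Icc 1 (n + 1))).filter (fun q => q.1 < q.2 ∧ y⁻¹ q.2 < y⁻¹ q.1))
      (p := fun q => x q.1 < x q.2)
    have e1 : (((Finset.Icc 1 (n + 1)) ×ˢ (Finset.Icc 1 (n + 1))).filter (fun q => q.1 < q.2 ∧ y⁻¹ q.2 < y⁻¹ q.1)).filter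
        (fun q => x q.1 < x q.2) = B2 := by
      ext ⟨p, q⟩
      simp only [hB2, Finset.mem_filter, Finset.mem_product]
      tauto
    have e2 : (((Finset.Icc 1 (n + 1)) ×ˢ (Finset.Icc 1 (n + 1))).filter (fun q => q.1 < q.2 ∧ y⁻¹ q.2 < y⁻¹ q.1)).filter
        (fun q => ¬ x q.1 < x q.2) = cross n x y := by
      ext ⟨p, q⟩
      simp only [cross, Finset.mem_filter, Finset.mem_product]
      constructor
      · rintro ⟨⟨hm, h1, h2⟩, h3⟩
        have : x p ≠ x q := fun h => by have := x.injective h; omega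
        exact ⟨hm, h1, h2, by omega⟩
      · rintro ⟨hm, h1, h2, h3⟩
        exact ⟨⟨hm, h1, h2⟩, by omega⟩
    rw [e1, e2] at h
    rw [hli]; omega
  have hlenA : len n (x * y) = A.card := rfl
  omega

lemma s_inv (j : ℕ) : (s j)⁻¹ = s j := Equiv.swap_inv ..
lemma len_inv {n : ℕ} {y : Equiv.Perm ℕ} (hy : PT n y) : len n y = len n y⁻¹ :=
  len_inv_filter hy

lemma len_one (n : ℕ) : len n 1 = 0 := by
  rw [len]
  convert Finset.card_empty
  ext ⟨p, q⟩
  simp only [Finset.mem_filter, Finset.mem_product, Finset.notMem_empty, iff_false]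
  rintro ⟨-, h1, h2⟩
  simp only [Equiv.Perm.one_apply] at h2
  omega

lemma len_s {n j : ℕ} (hj : j ∈ Finset.Icc 1 n) : len n (s j) = 1 := by
  rw [len]
  rw [Finset.mem_Icc] at hj
  have : ((Finset.Icc 1 (n + 1) ×ˢ Finset.Icc 1 (n + 1)).filter
      (fun q => q.1 < q.2 ∧ (s j) q.2 < (s j) q.1)) = {(j, j + 1)} := by
    ext ⟨p, q⟩
    simp only [Finset.mem_filter, Finset.mem_product, Finset.mem_Icc, Finset.mem_singleton,
      Prod.mk.injEq, s_apply]
    split_ifs <;> omega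
  rw [this, Finset.card_singleton]

lemma len_mul_s_asc {n : ℕ} {x : Equiv.Perm ℕ} {j : ℕ} (hx : PT n x)
    (hj : j ∈ Finset.Icc 1 n) (h : x j < x (j + 1)) : len n (x * s j) = len n x + 1 := by
  have hf := len_mul_formula hx (PT.s hj)
  have hc : cross n x (s j) = ∅ := by
    rw [Finset.mem_Icc] at hj
    ext ⟨a, b⟩
    simp only [cross, s_inv, Finset.mem_filter, Finset.mem_product, Finset.mem_Icc, s_apply,
      Finset.notMem_empty, iff_false]
    rintro ⟨⟨ha, hb⟩, h1, h2, h3⟩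
    have hflip : a = j ∧ b = j + 1 := by split_ifs at h2 <;> omega
    obtain ⟨rfl, rfl⟩ := hflip
    omega
  rw [hc, len_s hj] at hf
  simpa using hf

lemma len_mul_s_desc {n : ℕ} {x : Equiv.Perm ℕ} {j : ℕ} (hx : PT n x)
    (hj : j ∈ Finset.Icc 1 n) (h : x (j + 1) < x j) : len n (x * s j) + 1 = len n x := by
  have hf := len_mul_formula hx (PT.s hj)
  have hc : cross n x (s j) = {(j, j + 1)} := by
    rw [Finset.mem_Icc] at hj
    ext ⟨a, b⟩
    simp only [cross, s_inv, Finset.mem_filter, Finset.mem_product, Finset.mem_Icc, s_apply,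
      Finset.mem_singleton, Prod.mk.injEq]
    constructor
    · rintro ⟨⟨ha, hb⟩, h1, h2, h3⟩
      have hflip : a = j ∧ b = j + 1 := by split_ifs at h2 <;> omega
      obtain ⟨rfl, rfl⟩ := hflip
      exact ⟨rfl, rfl⟩
    · rintro ⟨rfl, rfl⟩
      refine ⟨⟨by omega, by omega⟩, by omega, ?_, h⟩
      split_ifs <;> omega
  rw [hc, len_s hj, Finset.card_singleton] at hf
  omega

lemma len_s_mul_asc {n : ℕ} {x : Equiv.Perm ℕ} {i : ℕ} (hx : PT n x)
    (hi : i ∈ Finset.Icc 1 n) (h : x⁻¹ i < x⁻¹ (i + 1)) : len n (s i * x) = len n x + 1 := by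
  have hf := len_mul_formula (PT.s hi) hx
  have hc : cross n (s i) x = ∅ := by
    rw [Finset.mem_Icc] at hi
    ext ⟨a, b⟩
    simp only [cross, Finset.mem_filter, Finset.mem_product, Finset.mem_Icc,
      Finset.notMem_empty, iff_false]
    rintro ⟨⟨ha, hb⟩, h1, h2, h3⟩
    simp only [s_apply] at h3
    have hflip : a = i ∧ b = i + 1 := by split_ifs at h3 <;> omega
    obtain ⟨rfl, rfl⟩ := hflip
    omega
  rw [hc, len_s hi] at hf
  simpa [add_comm] using hf

lemma len_s_mul_desc {n : ℕ} {x : Equiv.Perm ℕ} {i : ℕ} (hx : PT n x)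
    (hi : i ∈ Finset.Icc 1 n) (h : x⁻¹ (i + 1) < x⁻¹ i) : len n (s i * x) + 1 = len n x := by
  have hf := len_mul_formula (PT.s hi) hx
  have hic : i ∈ Finset.Icc 1 (n+1) ∧ i + 1 ∈ Finset.Icc 1 (n+1) := by
    rw [Finset.mem_Icc] at hi ⊢
    rw [Finset.mem_Icc]
    omega
  have hc : cross n (s i) x = {(i, i + 1)} := by
    rw [Finset.mem_Icc] at hi
    ext ⟨a, b⟩
    simp only [cross, Finset.mem_filter, Finset.mem_product, Finset.mem_Icc,
      Finset.mem_singleton, Prod.mk.injEq]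
    constructor
    · rintro ⟨⟨ha, hb⟩, h1, h2, h3⟩
      simp only [s_apply] at h3
      have hflip : a = i ∧ b = i + 1 := by split_ifs at h3 <;> omega
      obtain ⟨rfl, rfl⟩ := hflip
      exact ⟨rfl, rfl⟩
    · rintro ⟨rfl, rfl⟩
      refine ⟨⟨by omega, by omega⟩, by omega, h, ?_⟩
      simp only [s_apply]
      split_ifs <;> omega
  rw [hc, len_s hi, Finset.card_singleton] at hf
  omega


/-! ### chunk 4: key transposition-length lemma -/

lemma s_apply_other {j p : ℕ} (h1 : p ≠ j) (h2 : p ≠ j + 1) : s j p = p :=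
  Equiv.swap_apply_of_ne_of_ne h1 h2

lemma swap_decomp {a b : ℕ} (h : a + 1 < b) :
    Equiv.swap a b = s a * Equiv.swap (a + 1) b * s a := by
  have h1 := Equiv.swap_apply_apply (Equiv.swap a (a + 1)) (a + 1) b
  rw [Equiv.swap_apply_right] at h1
  rw [Equiv.swap_apply_of_ne_of_ne (by omega : b ≠ a) (by omega : b ≠ a + 1)] at h1
  rw [Equiv.swap_inv] at h1
  exact h1

lemma len_lt_mul_swap {n : ℕ} : ∀ (d a b : ℕ) (x : Equiv.Perm ℕ), b - a ≤ d → PT n x →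
    a ∈ Finset.Icc 1 (n + 1) → b ∈ Finset.Icc 1 (n + 1) → a < b → x a < x b →
    len n x < len n (x * Equiv.swap a b) := by
  intro d
  induction d with
  | zero => intro a b x hd _ _ _ hab _; omega
  | succ d ih =>
    intro a b x hd hx ha hb hab hval
    rw [Finset.mem_Icc] at ha hb
    by_cases hb1 : b = a + 1
    · subst hb1
      have : Equiv.swap a (a + 1) = s a := rfl
      rw [this]
      have := len_mul_s_asc hx (by rw [Finset.mem_Icc]; omega) hval
      omega
    · have hab2 : a + 1 < b := by omega
      have hdec := swap_decomp hab2
      set x1 := x * s a with hx1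
      set x2 := x1 * Equiv.swap (a + 1) b with hx2
      have hfin : x * Equiv.swap a b = x2 * s a := by
        rw [hdec, hx2, hx1]
        simp [mul_assoc]
      have haI : a ∈ Finset.Icc 1 n := by rw [Finset.mem_Icc]; omega
      have hPT1 : PT n x1 := hx.mul (PT.s haI)
      have hPT2 : PT n x2 := hPT1.mul (PT.swap (by rw [Finset.mem_Icc]; omega)
        (by rw [Finset.mem_Icc]; omega))
      have e1a : x1 a = x (a + 1) := by
        show x (s a a) = x (a + 1)
        rw [s_apply]; simp
      have e1c : x1 (a + 1) = x a := by
        show x (s a (a + 1)) = x a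
        rw [s_apply]; simp
      have e1b : x1 b = x b := by
        show x (s a b) = x b
        rw [s_apply_other (by omega) (by omega)]
      have e2a : x2 a = x (a + 1) := by
        show x1 (Equiv.swap (a + 1) b a) = x (a + 1)
        rw [Equiv.swap_apply_of_ne_of_ne (by omega) (by omega), e1a]
      have e2c : x2 (a + 1) = x b := by
        show x1 (Equiv.swap (a + 1) b (a + 1)) = x b
        rw [Equiv.swap_apply_left, e1b]
      have hne1 : x (a + 1) ≠ x a := fun h => by have := x.injective h; omega
      have hne2 : x (a + 1) ≠ x b := fun h => by have := x.injective h; omega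
      have h2 : len n x1 < len n x2 := by
        apply ih (a + 1) b x1 (by omega) hPT1 (by rw [Finset.mem_Icc]; omega)
          (by rw [Finset.mem_Icc]; omega) (by omega)
        rw [e1c, e1b]; exact hval
      rw [hfin]
      rcases lt_or_gt_of_ne hne1 with hlt | hgt
      · -- x (a+1) < x a
        have h1 : len n x1 + 1 = len n x := len_mul_s_desc hx haI hlt
        have h3 : len n (x2 * s a) = len n x2 + 1 := by
          apply len_mul_s_asc hPT2 haI
          rw [e2a, e2c]; omega
        omega
      · -- x a < x (a+1)
        have h1 : len n x1 = len n x + 1 := len_mul_s_asc hx haI hgt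
        rcases lt_or_gt_of_ne hne2 with hlt2 | hgt2
        · have h3 : len n (x2 * s a) = len n x2 + 1 := by
            apply len_mul_s_asc hPT2 haI
            rw [e2a, e2c]; omega
          omega
        · have h3 : len n (x2 * s a) + 1 = len n x2 := by
            apply len_mul_s_desc hPT2 haI
            rw [e2a, e2c]; omega
          omega

lemma len_lt_swap {n : ℕ} {x : Equiv.Perm ℕ} {a b : ℕ} (hx : PT n x)
    (ha : a ∈ Finset.Icc 1 (n + 1)) (hb : b ∈ Finset.Icc 1 (n + 1)) (hab : a < b)
    (hval : x a < x b) : len n x < len n (x * Equiv.swap a b) :=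
  len_lt_mul_swap (b - a) a b x le_rfl hx ha hb hab hval

lemma len_swap_lt {n : ℕ} {x : Equiv.Perm ℕ} {a b : ℕ} (hx : PT n x)
    (ha : a ∈ Finset.Icc 1 (n + 1)) (hb : b ∈ Finset.Icc 1 (n + 1)) (hab : a < b)
    (hval : x b < x a) : len n (x * Equiv.swap a b) < len n x := by
  have h2 : x * Equiv.swap a b * Equiv.swap a b = x := by
    rw [mul_assoc, Equiv.swap_mul_self, mul_one]
  have := len_lt_swap (x := x * Equiv.swap a b) (hx.mul (PT.swap ha hb)) ha hb hab ?_
  · rwa [h2] at this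
  · show x (Equiv.swap a b a) < x (Equiv.swap a b b)
    rw [Equiv.swap_apply_left, Equiv.swap_apply_right]
    exact hval



/-! ### chunk 5: identity detection -/

lemma asc_chain {x : Equiv.Perm ℕ} {p : ℕ} :
    ∀ q, p < q → (∀ c, p ≤ c → c < q → x c < x (c + 1)) → x p < x q := by
  intro q
  induction q with
  | zero => omega
  | succ q ih =>
    intro hpq h
    rcases Nat.lt_or_ge p q with hlt | hge
    · exact lt_trans (ih hlt (fun c hc1 hc2 => h c hc1 (by omega))) (h q (by omega) (by omega))
    · have : p = q := by omega
      subst this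
      exact h p le_rfl (by omega)

lemma eq_one_of_monoT {n : ℕ} {x : Equiv.Perm ℕ} (hx : PT n x)
    (hmono : ∀ p q, p ∈ Finset.Icc 1 (n + 1) → q ∈ Finset.Icc 1 (n + 1) → p < q → x p < x q) :
    x = 1 := by
  have hinvmono : ∀ p q, p ∈ Finset.Icc 1 (n + 1) → q ∈ Finset.Icc 1 (n + 1) → p < q →
      x⁻¹ p < x⁻¹ q := by
    intro p q hp hq hpq
    have hne : x⁻¹ p ≠ x⁻¹ q := fun h => by have := x⁻¹.injective h; omega
    rcases lt_or_gt_of_ne hne with h | h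
    · exact h
    · exfalso
      have := hmono _ _ (hx.inv.mem hq) (hx.inv.mem hp) h
      rw [Equiv.Perm.apply_inv_self, Equiv.Perm.apply_inv_self] at this
      omega
  have key : ∀ (y : Equiv.Perm ℕ), PT n y →
      (∀ p q, p ∈ Finset.Icc 1 (n + 1) → q ∈ Finset.Icc 1 (n + 1) → p < q → y p < y q) →
      ∀ p ∈ Finset.Icc 1 (n + 1), p ≤ y p := by
    intro y hy hm p hp
    rw [Finset.mem_Icc] at hp
    have hmap : ∀ q ∈ Finset.Icc 1 p, y q ∈ Finset.Icc 1 (y p) := by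
      intro q hq
      rw [Finset.mem_Icc] at hq ⊢
      have hqT : q ∈ Finset.Icc 1 (n + 1) := by rw [Finset.mem_Icc]; omega
      have h1 : y q ∈ Finset.Icc 1 (n + 1) := hy.mem hqT
      rw [Finset.mem_Icc] at h1
      rcases Nat.lt_or_ge q p with hlt | hge
      · have := hm q p hqT (by rw [Finset.mem_Icc]; omega) hlt
        omega
      · have : q = p := by omega
        subst this
        omega
    have hcard := Finset.card_le_card_of_injOn y hmap
      (Set.InjOn.mono (fun a _ => Set.mem_univ a) (Set.injOn_of_injective y.injective))
    rw [Nat.card_Icc, Nat.card_Icc] at hcard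
    omega
  apply Equiv.ext
  intro p
  by_cases hp : p ∈ Finset.Icc 1 (n + 1)
  · have h1 := key x hx hmono p hp
    have h2 := key x⁻¹ hx.inv hinvmono (x p) (hx.mem hp)
    rw [Equiv.Perm.inv_apply_self] at h2
    simp only [Equiv.Perm.one_apply]
    omega
  · rw [hx.fix hp]; rfl

lemma eq_one_of_len_zero {n : ℕ} {x : Equiv.Perm ℕ} (hx : PT n x) (hl : len n x = 0) :
    x = 1 := by
  apply eq_one_of_monoT hx
  intro p q hp hq hpq
  have hmem : (p, q) ∉ (Finset.Icc 1 (n + 1) ×ˢ Finset.Icc 1 (n + 1)).filter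
      (fun q' => q'.1 < q'.2 ∧ x q'.2 < x q'.1) := by
    rw [len, Finset.card_eq_zero] at hl
    rw [hl]
    exact Finset.notMem_empty _
  simp only [Finset.mem_filter, Finset.mem_product] at hmem
  have h3 : ¬(p < q ∧ x q < x p) := fun hcon => hmem ⟨⟨hp, hq⟩, hcon⟩
  have hne : x p ≠ x q := fun h => by have := x.injective h; omega
  by_contra hcon
  exact h3 ⟨hpq, by omega⟩

lemma eq_one_of_ascI {n : ℕ} {x : Equiv.Perm ℕ} (hx : PT n x)
    (hasc : ∀ i, i ∈ Finset.Icc 1 n → x i < x (i + 1)) : x = 1 := by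
  apply eq_one_of_monoT hx
  intro p q hp hq hpq
  rw [Finset.mem_Icc] at hp hq
  exact asc_chain q hpq (fun c hc1 hc2 => hasc c (by rw [Finset.mem_Icc]; omega))

lemma exists_desc {n : ℕ} {x : Equiv.Perm ℕ} (hx : PT n x) (hne : x ≠ 1) :
    ∃ i ∈ Finset.Icc 1 n, x (i + 1) < x i := by
  by_contra hc
  push_neg at hc
  apply hne
  apply eq_one_of_ascI hx
  intro i hi
  have h1 := hc i hi
  have hne2 : x i ≠ x (i + 1) := fun h => by have := x.injective h; omega
  omega

/-! ### chunk 6: words -/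

def wordProd (l : List ℕ) : Equiv.Perm ℕ := (l.map s).prod

lemma wordProd_nil : wordProd [] = 1 := rfl

lemma wordProd_cons (j : ℕ) (l : List ℕ) : wordProd (j :: l) = s j * wordProd l := by
  simp [wordProd]

lemma wordProd_append (l l' : List ℕ) : wordProd (l ++ l') = wordProd l * wordProd l' := by
  simp [wordProd]

lemma PT.wordProd {n : ℕ} {l : List ℕ} (h : ∀ j ∈ l, j ∈ Finset.Icc 1 n) :
    PT n (Stmt1.wordProd l) := by
  induction l with
  | nil => exact PT.one
  | cons j l ih =>
    rw [wordProd_cons]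
    exact (PT.s (h j List.mem_cons_self)).mul (ih fun j hj => h j (List.mem_cons_of_mem _ hj))

lemma len_s_mul_le {n : ℕ} {x : Equiv.Perm ℕ} {j : ℕ} (hx : PT n x)
    (hj : j ∈ Finset.Icc 1 n) : len n (s j * x) ≤ len n x + 1 := by
  have hne : x⁻¹ j ≠ x⁻¹ (j + 1) := fun h => by have := x⁻¹.injective h; omega
  rcases lt_or_gt_of_ne hne with h | h
  · rw [len_s_mul_asc hx hj h]
  · have := len_s_mul_desc hx hj h
    omega

lemma len_wordProd_le {n : ℕ} {l : List ℕ} (h : ∀ j ∈ l, j ∈ Finset.Icc 1 n) :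
    len n (wordProd l) ≤ l.length := by
  induction l with
  | nil => rw [wordProd_nil, len_one]; simp
  | cons j l ih =>
    rw [wordProd_cons]
    have h1 := len_s_mul_le (PT.wordProd (fun j hj => h j (List.mem_cons_of_mem _ hj)))
      (h j List.mem_cons_self)
    have h2 := ih (fun j hj => h j (List.mem_cons_of_mem _ hj))
    simp only [List.length_cons]
    omega


/-! ### chunk 7: parabolic subgroups -/

lemma parab_prop {n : ℕ} {J : Finset ℕ} (hJ : J ⊆ Finset.Icc 1 n) {x : Equiv.Perm ℕ}
    (hx : x ∈ parab J) : PT n x ∧ ∀ c, c ∉ J → ∀ p, p ≤ c → x p ≤ c := by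
  induction hx using Subgroup.closure_induction with
  | mem g hg =>
    obtain ⟨j, hj, rfl⟩ := hg
    constructor
    · exact PT.s (hJ hj)
    · intro c hc p hp
      have hjc : j ≠ c := fun h => hc (h ▸ hj)
      rw [s_apply]
      split_ifs <;> omega
  | one =>
    refine ⟨PT.one, ?_⟩
    intro c _ p hp
    simpa using hp
  | mul g h _ _ ihg ihh =>
    refine ⟨ihg.1.mul ihh.1, ?_⟩
    intro c hc p hp
    show g (h p) ≤ c
    exact ihg.2 c hc _ (ihh.2 c hc p hp)
  | inv g _ ihg =>
    refine ⟨ihg.1.inv, ?_⟩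
    intro c hc p hp
    have hmap : Finset.image g (Finset.range (c + 1)) = Finset.range (c + 1) := by
      apply Finset.eq_of_subset_of_card_le
      · intro q hq
        simp only [Finset.mem_image, Finset.mem_range] at hq ⊢
        obtain ⟨r, hr, rfl⟩ := hq
        have := ihg.2 c hc r (by omega)
        omega
      · rw [Finset.card_image_of_injective _ g.injective]
    have hp2 : p ∈ Finset.image g (Finset.range (c + 1)) := by
      rw [hmap]
      simp only [Finset.mem_range]
      omega
    simp only [Finset.mem_image, Finset.mem_range] at hp2
    obtain ⟨r, hr, hrq⟩ := hp2
    have : g⁻¹ p = r := by rw [← hrq]; exact Equiv.Perm.inv_apply_self g r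
    omega

lemma parab_PT {n : ℕ} {J : Finset ℕ} (hJ : J ⊆ Finset.Icc 1 n) {x : Equiv.Perm ℕ}
    (hx : x ∈ parab J) : PT n x := (parab_prop hJ hx).1

lemma parab_cut {n : ℕ} {J : Finset ℕ} (hJ : J ⊆ Finset.Icc 1 n) {x : Equiv.Perm ℕ}
    (hx : x ∈ parab J) {c : ℕ} (hc : c ∉ J) {p : ℕ} (hp : p ≤ c) : x p ≤ c :=
  (parab_prop hJ hx).2 c hc p hp

lemma parab_cut_gt {n : ℕ} {J : Finset ℕ} (hJ : J ⊆ Finset.Icc 1 n) {x : Equiv.Perm ℕ}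
    (hx : x ∈ parab J) {c : ℕ} (hc : c ∉ J) {b : ℕ} (hb : c < b) : c < x b := by
  by_contra h
  push_neg at h
  have h2 := parab_cut hJ (inv_mem hx) hc h
  rw [Equiv.Perm.inv_apply_self] at h2
  omega

/-! ### chunk 8: ascent, additivity, min reps -/

def Asc (J : Finset ℕ) (x : Equiv.Perm ℕ) : Prop := ∀ j ∈ J, x j < x (j + 1)

lemma s_mem_parab {J : Finset ℕ} {j : ℕ} (hj : j ∈ J) : s j ∈ parab J :=
  Subgroup.subset_closure ⟨j, hj, rfl⟩

lemma minrep_asc {n : ℕ} {J : Finset ℕ} (hJ : J ⊆ Finset.Icc 1 n) {w : Equiv.Perm ℕ}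
    (hw : IsMinRep n J w) (hPT : PT n w) : Asc J w := by
  intro j hj
  have hlen := hw (s j) (s_mem_parab hj)
  have hne : w j ≠ w (j + 1) := fun h => by have := w.injective h; omega
  rcases lt_or_gt_of_ne hne with h | h
  · exact h
  · exfalso
    have := len_mul_s_desc hPT (hJ hj) h
    omega

lemma asc_blocks {J : Finset ℕ} {x : Equiv.Perm ℕ} (hasc : Asc J x) {a b : ℕ} (hab : a < b)
    (hblk : ∀ c, a ≤ c → c < b → c ∈ J) : x a < x b :=
  asc_chain b hab (fun c hc1 hc2 => hasc c (hblk c hc1 hc2))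

lemma len_add {n : ℕ} {J : Finset ℕ} (hJ : J ⊆ Finset.Icc 1 n) {w u : Equiv.Perm ℕ}
    (hwPT : PT n w) (hasc : Asc J w) (hu : u ∈ parab J) :
    len n (w * u) = len n w + len n u := by
  have hf := len_mul_formula hwPT (parab_PT hJ hu)
  have hc : cross n w u = ∅ := by
    ext ⟨a, b⟩
    simp only [cross, Finset.mem_filter, Finset.mem_product, Finset.notMem_empty, iff_false]
    rintro ⟨⟨ha, hb⟩, h1, h2, h3⟩
    have hblk : ∀ c, a ≤ c → c < b → c ∈ J := by
      intro c hc1 hc2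
      by_contra hcJ
      have hA := parab_cut hJ (inv_mem hu) hcJ hc1
      have hB := parab_cut_gt hJ (inv_mem hu) hcJ hc2
      omega
    have := asc_blocks hasc h1 hblk
    omega
  rw [hc] at hf
  simpa using hf


/-! ### chunk 9: reduced words, exchange, Prop Z, subwords -/

lemma exists_reduced_word {n : ℕ} {J : Finset ℕ} (hJ : J ⊆ Finset.Icc 1 n) :
    ∀ N (x : Equiv.Perm ℕ), x ∈ parab J → len n x = N →
    ∃ l, (∀ j ∈ l, j ∈ J) ∧ wordProd l = x ∧ l.length = N := by
  intro N
  induction N with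
  | zero =>
    intro x hx hl
    have : x = 1 := eq_one_of_len_zero (parab_PT hJ hx) hl
    exact ⟨[], by simp, by rw [wordProd_nil, this], rfl⟩
  | succ N ih =>
    intro x hx hl
    have hPT : PT n x := parab_PT hJ hx
    have hne : x ≠ 1 := fun h => by rw [h, len_one] at hl; omega
    obtain ⟨i, hi, hdesc⟩ := exists_desc hPT hne
    have hiJ : i ∈ J := by
      by_contra hiJ
      have h1 := parab_cut hJ hx hiJ (le_refl i)
      have h2 := parab_cut_gt hJ hx hiJ (by omega : i < i + 1)
      omega
    have hx' : x * s i ∈ parab J := mul_mem hx (s_mem_parab hiJ)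
    have hl' : len n (x * s i) = N := by
      have := len_mul_s_desc hPT hi hdesc
      omega
    obtain ⟨l, hlJ, hlp, hll⟩ := ih (x * s i) hx' hl'
    refine ⟨l ++ [i], ?_, ?_, by simp [hll]⟩
    · intro j hj
      rcases List.mem_append.mp hj with h | h
      · exact hlJ j h
      · simp only [List.mem_singleton] at h
        subst h; exact hiJ
    · rw [wordProd_append, hlp]
      show x * s i * wordProd [i] = x
      rw [wordProd_cons, wordProd_nil, mul_one, mul_assoc, s_mul_s, mul_one]

lemma exchange {n : ℕ} : ∀ (l : List ℕ), (∀ j ∈ l, j ∈ Finset.Icc 1 n) →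
    ∀ a b, a ∈ Finset.Icc 1 (n + 1) → b ∈ Finset.Icc 1 (n + 1) → a < b →
    (wordProd l) b < (wordProd l) a →
    ∃ l', l'.Sublist l ∧ l'.length + 1 = l.length ∧
      wordProd l' = wordProd l * Equiv.swap a b := by
  intro l
  induction l with
  | nil =>
    intro _ a b _ _ hab hv
    rw [wordProd_nil] at hv
    simp only [Equiv.Perm.one_apply] at hv
    omega
  | cons j rest ih =>
    intro hlet a b ha hb hab hv
    have hjI : j ∈ Finset.Icc 1 n := hlet j List.mem_cons_self
    have hrest : ∀ j ∈ rest, j ∈ Finset.Icc 1 n := fun j hj => hlet j (List.mem_cons_of_mem _ hj)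
    rw [wordProd_cons] at hv
    set y' := wordProd rest with hy'
    by_cases hc : y' b < y' a
    · obtain ⟨l', hsub, hlen, hprod⟩ := ih hrest a b ha hb hab hc
      refine ⟨j :: l', List.Sublist.cons₂ j hsub, by simp [← hlen], ?_⟩
      rw [wordProd_cons, hprod, wordProd_cons, mul_assoc]
    · have hne : y' a ≠ y' b := fun h => by have := y'.injective h; omega
      have hc2 : y' a < y' b := by omega
      have hflip : y' a = j ∧ y' b = j + 1 := by
        apply s_flip hc2
        simp only [Equiv.Perm.mul_apply] at hv
        omega
      have hconj : s j = y' * Equiv.swap a b * y'⁻¹ := by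
        have := Equiv.swap_apply_apply y' a b
        rw [hflip.1, hflip.2] at this
        exact this
      refine ⟨rest, List.sublist_cons_self j rest, by simp, ?_⟩
      rw [wordProd_cons, hconj]
      rw [inv_mul_cancel_right, mul_assoc, Equiv.swap_mul_self, mul_one]

lemma exists_desc_split {n : ℕ} : ∀ (l : List ℕ), (∀ j ∈ l, j ∈ Finset.Icc 1 n) →
    len n (wordProd l) < l.length →
    ∃ l1 j l2, l = l1 ++ j :: l2 ∧ j ∈ Finset.Icc 1 n ∧
      (wordProd l1) (j + 1) < (wordProd l1) j := by
  intro l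
  induction l using List.reverseRecOn with
  | nil =>
    intro _ h
    rw [wordProd_nil, len_one] at h
    simp at h
  | append_singleton l0 j ih =>
    intro hlet hlen
    have hl0 : ∀ j ∈ l0, j ∈ Finset.Icc 1 n := fun j hj => hlet j (by simp [hj])
    have hjI : j ∈ Finset.Icc 1 n := hlet j (by simp)
    set x0 := wordProd l0 with hx0
    have hPT0 : PT n x0 := PT.wordProd hl0
    by_cases hdesc : x0 (j + 1) < x0 j
    · exact ⟨l0, j, [], by simp, hjI, hdesc⟩
    · have hne : x0 j ≠ x0 (j + 1) := fun h => by have := x0.injective h; omega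
      have hasc : x0 j < x0 (j + 1) := by omega
      have hup : len n (x0 * s j) = len n x0 + 1 := len_mul_s_asc hPT0 hjI hasc
      have hw : wordProd (l0 ++ [j]) = x0 * s j := by
        rw [wordProd_append, wordProd_cons, wordProd_nil, mul_one]
      rw [hw, hup] at hlen
      simp only [List.length_append, List.length_singleton] at hlen
      obtain ⟨l1, j', l2, heq, hj'I, hd⟩ := ih hl0 (by omega)
      exact ⟨l1, j', l2 ++ [j], by rw [heq]; simp, hj'I, hd⟩

lemma exists_reduced_sublist {n : ℕ} : ∀ (N : ℕ) (l : List ℕ), l.length ≤ N →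
    (∀ j ∈ l, j ∈ Finset.Icc 1 n) →
    ∃ l', l'.Sublist l ∧ wordProd l' = wordProd l ∧ l'.length = len n (wordProd l) := by
  intro N
  induction N with
  | zero =>
    intro l hl _
    have : l = [] := List.length_eq_zero_iff.mp (by omega)
    subst this
    exact ⟨[], List.Sublist.refl _, rfl, by rw [wordProd_nil, len_one]; rfl⟩
  | succ N ih =>
    intro l hl hlet
    rcases Nat.eq_or_lt_of_le (len_wordProd_le hlet) with heq | hlt
    · exact ⟨l, List.Sublist.refl _, rfl, heq.symm⟩
    · obtain ⟨l1, j, l2, heq, hjI, hdesc⟩ := exists_desc_split l hlet hlt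
      have hl1 : ∀ i ∈ l1, i ∈ Finset.Icc 1 n := by
        intro i hi; apply hlet; rw [heq]; simp [hi]
      have hl2 : ∀ i ∈ l2, i ∈ Finset.Icc 1 n := by
        intro i hi; apply hlet; rw [heq]; simp [hi]
      have hjT : j ∈ Finset.Icc 1 (n + 1) := by
        rw [Finset.mem_Icc] at hjI ⊢; omega
      have hj1T : j + 1 ∈ Finset.Icc 1 (n + 1) := by
        rw [Finset.mem_Icc] at hjI ⊢; omega
      obtain ⟨l1', hsub1, hlen1, hprod1⟩ := exchange l1 hl1 j (j + 1) hjT hj1T (by omega) hdesc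
      have hswap : Equiv.swap j (j + 1) = s j := rfl
      set lnew := l1' ++ l2 with hlnew
      have hprodnew : wordProd lnew = wordProd l := by
        rw [hlnew, wordProd_append, hprod1, hswap, heq, wordProd_append, wordProd_cons,
          mul_assoc]
      have hsubnew : lnew.Sublist l := by
        rw [heq, hlnew]
        exact List.Sublist.append hsub1 (List.sublist_cons_self j l2)
      have hlennew : lnew.length ≤ N := by
        have h1 : lnew.length = l1'.length + l2.length := by simp [hlnew]
        have h2 : l.length = l1.length + l2.length + 1 := by rw [heq]; simp; omega
        omega
      obtain ⟨l'', hsub'', hprod'', hlen''⟩ := ih lnew hlennew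
        (fun i hi => hlet i (hsubnew.subset hi))
      exact ⟨l'', hsub''.trans hsubnew, by rw [hprod'', hprodnew],
        by rw [hlen'', hprodnew]⟩

lemma bruhat_subword {n : ℕ} {x y : Equiv.Perm ℕ} (h : bruhatLE n x y) (L : List ℕ)
    (hlet : ∀ j ∈ L, j ∈ Finset.Icc 1 n) (hprod : wordProd L = y) (hlen : L.length = len n y) :
    ∃ L', L'.Sublist L ∧ wordProd L' = x ∧ L'.length = len n x := by
  induction h using Relation.ReflTransGen.head_induction_on with
  | refl => exact ⟨L, List.Sublist.refl _, hprod, hlen⟩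
  | @head a c hstep _ ih =>
    obtain ⟨Lc, hsub, hprodc, hlenc⟩ := ih
    obtain ⟨i, hiT, j, hjT, hij, hceq, hlt⟩ := hstep
    have hletc : ∀ j ∈ Lc, j ∈ Finset.Icc 1 n := fun j hj => hlet j (hsub.subset hj)
    have hPTc : PT n c := hprodc ▸ PT.wordProd hletc
    obtain ⟨a', b', ha'T, hb'T, hab', hswap⟩ :
        ∃ a' b', a' ∈ Finset.Icc 1 (n + 1) ∧ b' ∈ Finset.Icc 1 (n + 1) ∧ a' < b' ∧
          Equiv.swap i j = Equiv.swap a' b' := by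
      rcases lt_or_gt_of_ne hij with h | h
      · exact ⟨i, j, hiT, hjT, h, rfl⟩
      · exact ⟨j, i, hjT, hiT, h, Equiv.swap_comm i j⟩
    have haeq : a = c * Equiv.swap a' b' := by
      rw [hceq, hswap, mul_assoc, Equiv.swap_mul_self, mul_one]
    have hcv : c b' < c a' := by
      have hne : c a' ≠ c b' := fun h => by have := c.injective h; omega
      rcases lt_or_gt_of_ne hne with hv | hv
      · exfalso
        have := len_lt_swap hPTc ha'T hb'T hab' hv
        rw [← haeq] at this
        omega
      · exact hv
    have hdel := exchange Lc hletc a' b' ha'T hb'T hab' (by rw [hprodc]; exact hcv)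
    obtain ⟨Lc', hsub', hlen', hprod'⟩ := hdel
    rw [hprodc, ← haeq] at hprod'
    obtain ⟨L'', hsub'', hprod'', hlen''⟩ := exists_reduced_sublist Lc'.length Lc' le_rfl
      (fun j hj => hletc j (hsub'.subset hj))
    exact ⟨L'', hsub''.trans (hsub'.trans hsub), by rw [hprod'', hprod'],
      by rw [hlen'', hprod']⟩

lemma step_left {n : ℕ} {j : ℕ} {x : Equiv.Perm ℕ} (hj : j ∈ Finset.Icc 1 n) (hx : PT n x)
    (h : len n x < len n (s j * x)) : bruhatLE n x (s j * x) := by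
  apply Relation.ReflTransGen.single
  have hjT : j ∈ Finset.Icc 1 (n + 1) := by rw [Finset.mem_Icc] at hj ⊢; omega
  have hj1T : j + 1 ∈ Finset.Icc 1 (n + 1) := by rw [Finset.mem_Icc] at hj ⊢; omega
  refine ⟨x⁻¹ j, hx.inv.mem hjT, x⁻¹ (j + 1), hx.inv.mem hj1T,
    fun hc => by have := x⁻¹.injective hc; omega, ?_, h⟩
  have hconj := Equiv.swap_apply_apply x (x⁻¹ j) (x⁻¹ (j + 1))
  rw [Equiv.Perm.apply_inv_self, Equiv.Perm.apply_inv_self] at hconj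
  have : s j = x * Equiv.swap (x⁻¹ j) (x⁻¹ (j + 1)) * x⁻¹ := hconj
  rw [this]
  rw [inv_mul_cancel_right]

lemma propZ {n : ℕ} {i : ℕ} (hi : i ∈ Finset.Icc 1 n) {u y : Equiv.Perm ℕ}
    (h : bruhatLE n u y) (hu : PT n u) :
    PT n y ∧ (bruhatLE n (s i * u) y ∨ bruhatLE n (s i * u) (s i * y)) :=
  by
  induction h with
  | refl => exact ⟨hu, Or.inr Relation.ReflTransGen.refl⟩
  | tail hchain hstep ih =>
    rename_i w' y'
    obtain ⟨hPTw', ihd⟩ := ih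
    obtain ⟨i', hi'T, j', hj'T, hij', hyeq, hlt⟩ := hstep
    obtain ⟨a, b, haT, hbT, hab, hswap⟩ :
        ∃ a b, a ∈ Finset.Icc 1 (n + 1) ∧ b ∈ Finset.Icc 1 (n + 1) ∧ a < b ∧
          Equiv.swap i' j' = Equiv.swap a b := by
      rcases lt_or_gt_of_ne hij' with h | h
      · exact ⟨i', j', hi'T, hj'T, h, rfl⟩
      · exact ⟨j', i', hj'T, hi'T, h, Equiv.swap_comm i' j'⟩
    rw [hswap] at hyeq
    have hPTy : PT n y' := hyeq ▸ hPTw'.mul (PT.swap haT hbT)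
    have hval : w' a < w' b := by
      have hne : w' a ≠ w' b := fun h => by have := w'.injective h; omega
      rcases lt_or_gt_of_ne hne with hv | hv
      · exact hv
      · exfalso
        have := len_swap_lt hPTw' haT hbT hab hv
        rw [← hyeq] at this
        omega
    refine ⟨hPTy, ?_⟩
    rcases ihd with hsu | hsu
    · left
      exact hsu.tail ⟨i', hi'T, j', hj'T, hij', by rw [hyeq, hswap], hlt⟩
    · set z1 := s i * w' with hz1
      have hPTz1 : PT n z1 := (PT.s hi).mul hPTw'
      have hnez : z1 a ≠ z1 b := fun h => by have := z1.injective h; omega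
      rcases lt_or_gt_of_ne hnez with hv | hv
      · right
        refine hsu.tail ⟨a, haT, b, hbT, by omega, ?_, ?_⟩
        · rw [hyeq, hz1, mul_assoc]
        · have := len_lt_swap hPTz1 haT hbT hab hv
          have he : s i * y' = z1 * Equiv.swap a b := by rw [hyeq, hz1, mul_assoc]
          rw [he]
          exact this
      · left
        have hflip : w' a = i ∧ w' b = i + 1 := by
          apply s_flip hval
          simp only [hz1, Equiv.Perm.mul_apply] at hv
          omega
        have hconj : s i = w' * Equiv.swap a b * w'⁻¹ := by
          have := Equiv.swap_apply_apply w' a b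
          rw [hflip.1, hflip.2] at this
          exact this
        have : s i * w' = y' := by
          rw [hconj, inv_mul_cancel_right, ← hyeq]
        rw [hz1, this] at hsu
        exact hsu

lemma subword_le {n : ℕ} : ∀ (L : List ℕ), (∀ j ∈ L, j ∈ Finset.Icc 1 n) →
    len n (wordProd L) = L.length → ∀ L', L'.Sublist L →
    bruhatLE n (wordProd L') (wordProd L) := by
  intro L
  induction L with
  | nil =>
    intro _ _ L' hsub
    rw [List.sublist_nil.mp hsub]
    exact Relation.ReflTransGen.refl
  | cons j M ih =>
    intro hlet hred L' hsub
    have hjI : j ∈ Finset.Icc 1 n := hlet j List.mem_cons_self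
    have hM : ∀ i ∈ M, i ∈ Finset.Icc 1 n := fun i hi => hlet i (List.mem_cons_of_mem _ hi)
    have hPTM : PT n (wordProd M) := PT.wordProd hM
    have hlenM : len n (wordProd M) = M.length := by
      have h1 := len_wordProd_le hM
      have h2 := len_s_mul_le hPTM hjI
      rw [wordProd_cons] at hred
      simp only [List.length_cons] at hred
      omega
    have hup : len n (wordProd M) < len n (s j * wordProd M) := by
      rw [← wordProd_cons, hred, hlenM]
      simp
    have hstepM : bruhatLE n (wordProd M) (wordProd (j :: M)) := by
      rw [wordProd_cons]
      exact step_left hjI hPTM hup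
    rcases List.sublist_cons_iff.mp hsub with h | ⟨M', rfl, hM'⟩
    · exact (ih hM hlenM L' h).trans hstepM
    · have hx0 := ih hM hlenM M' hM'
      have hPT0 : PT n (wordProd M') := PT.wordProd (fun i hi => hM i (hM'.subset hi))
      obtain ⟨-, hor⟩ := propZ hjI hx0 hPT0
      rw [wordProd_cons, wordProd_cons]
      rcases hor with h | h
      · rw [wordProd_cons] at hstepM
        exact h.trans hstepM
      · exact h

lemma le_mul {n : ℕ} {J : Finset ℕ} (hJ : J ⊆ Finset.Icc 1 n) {v : Equiv.Perm ℕ}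
    (hv : v ∈ parab J) : ∀ (N : ℕ) (x : Equiv.Perm ℕ), len n x = N → PT n x → Asc J x →
    bruhatLE n v (x * v) := by
  intro N
  induction N with
  | zero =>
    intro x hl hx _
    rw [eq_one_of_len_zero hx hl, one_mul]
    exact Relation.ReflTransGen.refl
  | succ N ih =>
    intro x hl hx hasc
    have hne : x ≠ 1 := fun h => by rw [h, len_one] at hl; omega
    have hinv_ne : x⁻¹ ≠ 1 := fun h => hne (by rw [← inv_inv x, h, inv_one])
    obtain ⟨i, hi, hdesc⟩ := exists_desc hx.inv hinv_ne
    set x' := s i * x with hx'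
    have hPTx' : PT n x' := (PT.s hi).mul hx
    have hlx' : len n x' = N := by
      have := len_s_mul_desc hx hi hdesc
      rw [hx']
      omega
    have hasc' : Asc J x' := by
      intro j hj
      show (s i) (x j) < (s i) (x (j + 1))
      apply s_mono (hasc j hj)
      rintro ⟨h1, h2⟩
      have e1 : x⁻¹ i = j := by rw [← h1, Equiv.Perm.inv_apply_self]
      have e2 : x⁻¹ (i + 1) = j + 1 := by rw [← h2, Equiv.Perm.inv_apply_self]
      omega
    have hIH := ih x' hlx' hPTx' hasc'
    have hPTv : PT n v := parab_PT hJ hv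
    have hid : s i * (x' * v) = x * v := by
      rw [hx', ← mul_assoc, ← mul_assoc, s_mul_s, one_mul]
    have hlstep : len n (x' * v) < len n (s i * (x' * v)) := by
      rw [hid, len_add hJ hx hasc hv, len_add hJ hPTx' hasc' hv]
      omega
    have hstep := step_left hi (hPTx'.mul hPTv) hlstep
    rw [hid] at hstep
    exact hIH.trans hstep


/-- Let `W = S_{n+1}`, `K ⊆ I = {1,…,n}`, `m ∈ I ∖ K`, `w ∈ W^{I∖{m}} ∩ W_{I∖K}`
and `v ∈ W_K`.  Then `wv` is the Bruhat-minimum of `{ y ∈ w W_{I∖{m}} ∣ y ≥ v }`. -/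
theorem up_eq_mul (n : ℕ) (K : Finset ℕ) (hK : K ⊆ Finset.Icc 1 n)
    (m : ℕ) (hm : m ∈ Finset.Icc 1 n) (hmK : m ∉ K)
    (w : Equiv.Perm ℕ)
    (hw : IsMinRep n ((Finset.Icc 1 n).erase m) w)
    (hwK : w ∈ parab ((Finset.Icc 1 n) \ K))
    (v : Equiv.Perm ℕ) (hv : v ∈ parab K) :
    ((∃ u ∈ parab ((Finset.Icc 1 n).erase m), w * v = w * u) ∧ bruhatLE n v (w * v)) ∧
      ∀ y, (∃ u ∈ parab ((Finset.Icc 1 n).erase m), y = w * u) → bruhatLE n v y →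
        bruhatLE n (w * v) y := by

  set J := (Finset.Icc 1 n).erase m with hJdef
  have hJI : J ⊆ Finset.Icc 1 n := Finset.erase_subset m _
  have hKJ : K ⊆ J := by
    intro k hk
    rw [hJdef, Finset.mem_erase]
    exact ⟨fun h => hmK (h ▸ hk), hK hk⟩
  have hIKI : (Finset.Icc 1 n) \ K ⊆ Finset.Icc 1 n := Finset.sdiff_subset
  have hvJ : v ∈ parab J :=
    Subgroup.closure_mono (Set.image_mono (Finset.coe_subset.mpr hKJ)) hv
  have hPTw : PT n w := parab_PT hIKI hwK
  have hPTv : PT n v := parab_PT hK hv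
  have hAsc : Asc J w := minrep_asc hJI hw hPTw
  refine ⟨⟨⟨v, hvJ, rfl⟩, le_mul hJI hvJ (len n w) w rfl hPTw hAsc⟩, ?_⟩
  rintro y ⟨u, hu, rfl⟩ hvy
  obtain ⟨Lw, hLwlet, hLwprod, hLwlen⟩ := exists_reduced_word hIKI (len n w) w hwK rfl
  obtain ⟨Lu, hLulet, hLuprod, hLulen⟩ := exists_reduced_word hJI (len n u) u hu rfl
  set L := Lw ++ Lu with hLdef
  have hLlet : ∀ j ∈ L, j ∈ Finset.Icc 1 n := by
    intro j hj
    rcases List.mem_append.mp hj with h | h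
    · exact hIKI (hLwlet j h)
    · exact hJI (hLulet j h)
  have hLprod : wordProd L = w * u := by rw [hLdef, wordProd_append, hLwprod, hLuprod]
  have hLlen : L.length = len n (w * u) := by
    rw [hLdef, List.length_append, hLwlen, hLulen, len_add hJI hPTw hAsc hu]
  obtain ⟨L', hsubL', hprodL', hlenL'⟩ := bruhat_subword hvy L hLlet hLprod hLlen
  obtain ⟨L1, L2, heqL', hsub1, hsub2⟩ := List.sublist_append_iff.mp hsubL'
  have hL1nil : L1 = [] := by
    cases L1 with
    | nil => rfl
    | cons j L1'' =>
      exfalso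
      have hjmem : j ∈ (Finset.Icc 1 n) \ K := hLwlet j (hsub1.subset List.mem_cons_self)
      rw [Finset.mem_sdiff] at hjmem
      obtain ⟨hjI, hjK⟩ := hjmem
      have hz : wordProd L' = s j * wordProd (L1'' ++ L2) := by
        rw [heqL', List.cons_append, wordProd_cons]
      have hzv : wordProd (L1'' ++ L2) = s j * v := by
        rw [← hprodL', hz, ← mul_assoc, s_mul_s, one_mul]
      have hzlet : ∀ i ∈ L1'' ++ L2, i ∈ Finset.Icc 1 n := by
        intro i hi
        apply hLlet
        apply hsubL'.subset
        rw [heqL', List.cons_append]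
        exact List.mem_cons_of_mem _ hi
      have hzlen : len n (s j * v) ≤ L1''.length + L2.length := by
        rw [← hzv]
        have := len_wordProd_le hzlet
        simpa using this
      have hLlen' : L'.length = L1''.length + L2.length + 1 := by
        rw [heqL', List.cons_append]
        simp [List.length_append]
      have hasc_j : v⁻¹ j < v⁻¹ (j + 1) := by
        have h1 : v⁻¹ j ≤ j := parab_cut hK (inv_mem hv) hjK le_rfl
        have h2 : j < v⁻¹ (j + 1) := parab_cut_gt hK (inv_mem hv) hjK (by omega)
        omega
      have := len_s_mul_asc hPTv hjI hasc_j
      omega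
  subst hL1nil
  simp only [List.nil_append] at heqL'
  subst heqL'
  have hfinal := subword_le L hLlet (by rw [hLprod]; exact hLlen.symm) (Lw ++ L')
    (List.Sublist.append (List.Sublist.refl Lw) hsub2)
  rw [hLprod] at hfinal
  have : wordProd (Lw ++ L') = w * v := by
    rw [wordProd_append, hLwprod, hprodL']
  rwa [this] at hfinal

end Stmt1
end

section
/- Let $W = S_{n+1}$, $w = s_1 s_2 \cdots s_k$ for some $0 \le k \le n$, and for $k+1 \le p \le n$ let $\beta_p := \alpha_1 + \cdots + \alpha_p = \varepsilon_1 - \varepsilon_{p+1}$. Then $s_{\beta_p} w = s_1 s_2 \cdots s_{p-1} s_p s_{p-1} \cdots s_{k+1}$; moreover $\ell(s_{\beta_p} w) > \ell(w) + 1$ for $k+1 < p \le n$, and $\ell(s_{\beta_{k+1}} w) = \ell(w) + 1$. -/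
namespace Stmt5

/-- The simple transposition `s_i = (i, i+1)` of `S_{n+1}`, realized inside `Perm ℕ`
(our permutations move only the letters `1, …, n+1`). -/
def s (i : ℕ) : Equiv.Perm ℕ := Equiv.swap i (i + 1)

/-- The product `s_{l_1} s_{l_2} ⋯ s_{l_r}` of the simple reflections listed in `l`. -/
def word (l : List ℕ) : Equiv.Perm ℕ := (l.map s).prod

/-- The length (number of inversions among the letters `1, …, n+1`, counted over
`{0, 1, …, n+1}`; the letter `0` is fixed and contributes nothing). -/
def len (n : ℕ) (w : Equiv.Perm ℕ) : ℕ :=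
  ((Finset.range (n + 2) ×ˢ Finset.range (n + 2)).filter
    (fun q => q.1 < q.2 ∧ w q.2 < w q.1)).card

lemma word_append (l1 l2 : List ℕ) : word (l1 ++ l2) = word l1 * word l2 := by
  simp [word]

lemma word_single (a j : ℕ) :
    word [a] j = if j = a then a + 1 else if j = a + 1 then a else j := by
  simp [word, s, Equiv.swap_apply_def]

lemma word_apply (m j : ℕ) :
    word (List.range' 1 m) j = if 1 ≤ j ∧ j ≤ m then j + 1 else if j = m + 1 then 1 else j := by
  induction m generalizing j with
  | zero => simp [word]; split_ifs <;> omega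
  | succ m ih =>
    rw [List.range'_concat, word_append, Equiv.Perm.mul_apply, ih, word_single]
    split_ifs <;> omega

lemma rword_apply (a m j : ℕ) :
    word ((List.range' a m).reverse) j =
      if j = a ∧ 0 < m then a + m else if a + 1 ≤ j ∧ j ≤ a + m then j - 1 else j := by
  induction m generalizing a j with
  | zero => simp [word]
  | succ m ih =>
    rw [List.range'_succ, List.reverse_cons, word_append, Equiv.Perm.mul_apply, ih, word_single]
    split_ifs <;> omega

lemma cycle_apply (k p j : ℕ) (hp : k + 1 ≤ p) :
    (Equiv.swap 1 (p + 1) * word (List.range' 1 k)) j =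
      if 1 ≤ j ∧ j ≤ k then j + 1 else if j = k + 1 then p + 1 else if j = p + 1 then 1 else j := by
  rw [Equiv.Perm.mul_apply, word_apply, Equiv.swap_apply_def]
  split_ifs <;> omega

lemma part1 (k p : ℕ) (hp : k + 1 ≤ p) :
    Equiv.swap 1 (p + 1) * word (List.range' 1 k) =
      word (List.range' 1 p ++ (List.range' (k + 1) (p - 1 - k)).reverse) := by
  ext j
  rw [cycle_apply k p j hp, word_append, Equiv.Perm.mul_apply, rword_apply, word_apply]
  split_ifs <;> omega

lemma len_word (n k : ℕ) (hk : k ≤ n) : len n (word (List.range' 1 k)) = k := by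
  have h : ((Finset.range (n + 2) ×ˢ Finset.range (n + 2)).filter
      (fun q => q.1 < q.2 ∧ word (List.range' 1 k) q.2 < word (List.range' 1 k) q.1)) =
      (Finset.Ico 1 (k + 1)).image (fun i => (i, k + 1)) := by
    ext ⟨a, b⟩
    simp only [Finset.mem_filter, Finset.mem_product, Finset.mem_range, Finset.mem_image,
      Finset.mem_Ico, Prod.mk.injEq, word_apply]
    constructor
    · rintro ⟨⟨ha, hb⟩, hab, hlt⟩
      refine ⟨a, ⟨?_, ?_⟩, rfl, ?_⟩ <;> split_ifs at hlt <;> omega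
    · rintro ⟨i, hi, rfl, rfl⟩
      refine ⟨⟨?_, ?_⟩, ?_, ?_⟩ <;> (try split_ifs) <;> omega
  rw [len, h, Finset.card_image_of_injective _ (fun x y h => by simpa using h)]
  simp

lemma len_cycle (n k p : ℕ) (hp : k + 1 ≤ p) (hpn : p ≤ n) :
    len n (Equiv.swap 1 (p + 1) * word (List.range' 1 k)) = 2 * p - k - 1 := by
  have h : ((Finset.range (n + 2) ×ˢ Finset.range (n + 2)).filter
      (fun q => q.1 < q.2 ∧ (Equiv.swap 1 (p + 1) * word (List.range' 1 k)) q.2 <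
        (Equiv.swap 1 (p + 1) * word (List.range' 1 k)) q.1)) =
      (Finset.Ico 1 (p + 1)).image (fun i => (i, p + 1)) ∪
      (Finset.Ico (k + 2) (p + 1)).image (fun j => (k + 1, j)) := by
    ext ⟨a, b⟩
    simp only [Finset.mem_filter, Finset.mem_product, Finset.mem_range, Finset.mem_union,
      Finset.mem_image, Finset.mem_Ico, Prod.mk.injEq, cycle_apply k p _ hp]
    constructor
    · rintro ⟨⟨ha, hb⟩, hab, hlt⟩
      by_cases hb' : b = p + 1
      · exact Or.inl ⟨a, by split_ifs at hlt <;> omega, rfl, hb'.symm⟩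
      · refine Or.inr ⟨b, ?_, ?_, rfl⟩ <;> split_ifs at hlt <;> omega
    · rintro (⟨i, hi, rfl, rfl⟩ | ⟨j, hj, rfl, rfl⟩) <;>
        refine ⟨⟨?_, ?_⟩, ?_, ?_⟩ <;> (try split_ifs) <;> omega
  have hd : Disjoint ((Finset.Ico 1 (p + 1)).image (fun i => (i, p + 1)))
      ((Finset.Ico (k + 2) (p + 1)).image (fun j => (k + 1, j))) := by
    simp only [Finset.disjoint_left, Finset.mem_image, Finset.mem_Ico]
    rintro ⟨a, b⟩ ⟨i, hi, h1⟩ ⟨j, hj, h2⟩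
    simp only [Prod.mk.injEq] at h1 h2
    omega
  rw [len, h, Finset.card_union_of_disjoint hd,
    Finset.card_image_of_injective _ (fun x y h => by simpa using h),
    Finset.card_image_of_injective _ (fun x y h => by simpa using h)]
  simp only [Nat.card_Ico]
  omega

/-- Let `w = s_1 s_2 ⋯ s_k` in `S_{n+1}` (`0 ≤ k ≤ n`) and, for `k+1 ≤ p ≤ n`, let
`s_{β_p}` be the reflection in the root `β_p = ε_1 - ε_{p+1}`, i.e. the transposition
`(1, p+1)`.  Then `s_{β_p} w = s_1 s_2 ⋯ s_{p-1} s_p s_{p-1} ⋯ s_{k+1}`; moreover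
`ℓ(s_{β_p} w) > ℓ(w) + 1` for `k+1 < p ≤ n`, and `ℓ(s_{β_{k+1}} w) = ℓ(w) + 1`. -/
theorem refl_mul_word (n k : ℕ) (hk : k ≤ n) :
    (∀ p, k + 1 ≤ p → p ≤ n →
        Equiv.swap 1 (p + 1) * word (List.range' 1 k) =
          word (List.range' 1 p ++ (List.range' (k + 1) (p - 1 - k)).reverse)) ∧
    (∀ p, k + 1 < p → p ≤ n →
        len n (word (List.range' 1 k)) + 1 <
          len n (Equiv.swap 1 (p + 1) * word (List.range' 1 k))) ∧
    (k + 1 ≤ n →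
        len n (Equiv.swap 1 (k + 2) * word (List.range' 1 k)) =
          len n (word (List.range' 1 k)) + 1) := by
  refine ⟨fun p hp _ => part1 k p hp, fun p hp hpn => ?_, fun hkn => ?_⟩
  · rw [len_word n k hk, len_cycle n k p (by omega) hpn]
    omega
  · have := len_cycle n k (k + 1) le_rfl hkn
    rw [len_word n k hk, show k + 1 + 1 = k + 2 by rfl] at *
    omega

end Stmt5
end

section
/- Let $w \in S_n$ be a permutation with $\ell(w) < \ell(w_\circ)$ that is dominant (i.e. its code is weakly decreasing). Let $i_0 := \min\{1 \le i \le n-1 \mid c_i(w) = c_{i+1}(w)\}$ (this set is nonempty) and $v := w s_{i_0}$. Then $v$ is dominant, $\ell(v) = \ell(w) + 1$, and the code of $v$ satisfies $c_i(v) = c_i(w)$ for $i \ne i_0$ and $c_{i_0}(v) = c_{i_0}(w) + 1$. -/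
namespace Stmt10

/-- The simple transposition `s_i = (i, i+1)`. -/
def s (i : ℕ) : Equiv.Perm ℕ := Equiv.swap i (i + 1)

/-- The code of `w ∈ S_n` (permutations of `{1,…,n}` inside `Perm ℕ`):
`c_i(w) = |{ j : i < j ≤ n, w(j) < w(i) }|`. -/
def code (n : ℕ) (w : Equiv.Perm ℕ) (i : ℕ) : ℕ :=
  ((Finset.Ioc i n).filter (fun j => w j < w i)).card

/-- The number of inversions of `w` among the letters `1, …, n`. -/
def len (n : ℕ) (w : Equiv.Perm ℕ) : ℕ :=
  ((Finset.Icc 1 n ×ˢ Finset.Icc 1 n).filter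
    (fun q => q.1 < q.2 ∧ w q.2 < w q.1)).card

/-- `w` is dominant iff its code is weakly decreasing. -/
def Dominant (n : ℕ) (w : Equiv.Perm ℕ) : Prop :=
  ∀ i, 1 ≤ i → i < n → code n w (i + 1) ≤ code n w i

lemma code_le (n : ℕ) (w : Equiv.Perm ℕ) (i : ℕ) : code n w i ≤ n - i := by
  calc code n w i ≤ (Finset.Ioc i n).card := Finset.card_filter_le _ _
    _ = n - i := Nat.card_Ioc i n

lemma Ioc_eq_insert {i n : ℕ} (h : i + 1 ≤ n) :
    Finset.Ioc i n = insert (i + 1) (Finset.Ioc (i + 1) n) := by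
  ext j; simp only [Finset.mem_Ioc, Finset.mem_insert]; omega

lemma code_succ (n : ℕ) (w : Equiv.Perm ℕ) {i : ℕ} (h : i + 1 ≤ n) :
    code n w i = (if w (i + 1) < w i then 1 else 0)
      + ((Finset.Ioc (i + 1) n).filter (fun j => w j < w i)).card := by
  unfold code
  rw [Ioc_eq_insert h, Finset.filter_insert]
  split_ifs with hlt
  · rw [Finset.card_insert_of_notMem (by simp)]; omega
  · simp

lemma len_eq_sum (n : ℕ) (w : Equiv.Perm ℕ) :
    len n w = ∑ i ∈ Finset.Icc 1 n, code n w i := by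
  unfold len
  rw [Finset.card_eq_sum_card_fiberwise (f := Prod.fst) (t := Finset.Icc 1 n)
    (fun x hx => (Finset.mem_product.1 (Finset.mem_filter.1 hx).1).1)]
  refine Finset.sum_congr rfl fun a ha => ?_
  simp only [Finset.mem_Icc] at ha
  unfold code
  refine Finset.card_bij' (fun x _ => x.2) (fun j _ => (a, j)) ?_ ?_ ?_ ?_
  · intro x hx
    simp only [Finset.filter_filter, Finset.mem_filter, Finset.mem_product, Finset.mem_Icc] at hx
    simp only [Finset.mem_filter, Finset.mem_Ioc]
    obtain ⟨⟨⟨x11, x12⟩, x21, x22⟩, ⟨hlt, hw⟩, hfst⟩ := hx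
    subst hfst
    exact ⟨⟨hlt, x22⟩, hw⟩
  · intro j hj
    simp only [Finset.mem_filter, Finset.mem_Ioc] at hj
    simp only [Finset.filter_filter, Finset.mem_filter, Finset.mem_product, Finset.mem_Icc]
    exact ⟨⟨⟨ha.1, ha.2⟩, by omega, by omega⟩, ⟨hj.1.1, hj.2⟩, trivial⟩
  · intro x hx
    simp only [Finset.filter_filter, Finset.mem_filter] at hx
    exact Prod.ext hx.2.2.symm rfl
  · intro j _; rfl

lemma sum_gauss (n : ℕ) : ∑ i ∈ Finset.Icc 1 n, (n - i) = n * (n - 1) / 2 := by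
  rw [← Finset.sum_range_id n]
  rw [show Finset.Icc 1 n = (Finset.range n).map ⟨(· + 1), add_left_injective 1⟩ by
    ext j
    simp only [Finset.mem_map, Finset.mem_range, Finset.mem_Icc, Function.Embedding.coeFn_mk]
    constructor
    · rintro ⟨hj1, hj2⟩; exact ⟨j - 1, by omega, by omega⟩
    · rintro ⟨a, ha, rfl⟩; omega]
  rw [Finset.sum_map]
  simp only [Function.Embedding.coeFn_mk]
  rw [← Finset.sum_range_reflect (fun j => j) n]
  exact Finset.sum_congr rfl fun i hi => by simp at hi; omega

lemma swap_mem_Ioc {i₀ i n a : ℕ} (h : i < i₀) (hn : i₀ + 1 ≤ n)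
    (ha : a ∈ Finset.Ioc i n) : Equiv.swap i₀ (i₀ + 1) a ∈ Finset.Ioc i n := by
  rcases eq_or_ne a i₀ with rfl | h1
  · rw [Equiv.swap_apply_left]; simp only [Finset.mem_Ioc]; omega
  rcases eq_or_ne a (i₀ + 1) with rfl | h2
  · rw [Equiv.swap_apply_right]; simp only [Finset.mem_Ioc]; omega
  · rwa [Equiv.swap_apply_of_ne_of_ne h1 h2]

lemma code_mul_swap_of_lt (n : ℕ) (w : Equiv.Perm ℕ) {i₀ i : ℕ} (h : i < i₀)
    (hn : i₀ + 1 ≤ n) : code n (w * s i₀) i = code n w i := by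
  have hfix : (w * s i₀) i = w i := by
    simp only [s, Equiv.Perm.mul_apply,
      Equiv.swap_apply_of_ne_of_ne (show i ≠ i₀ by omega) (show i ≠ i₀ + 1 by omega)]
  unfold code
  rw [hfix]
  apply Finset.card_bij' (fun a _ => Equiv.swap i₀ (i₀ + 1) a)
    (fun a _ => Equiv.swap i₀ (i₀ + 1) a)
  · intro a ha
    simp only [Finset.mem_filter] at ha ⊢
    refine ⟨swap_mem_Ioc h hn ha.1, ?_⟩
    have := ha.2
    simpa only [s, Equiv.Perm.mul_apply] using this
  · intro a ha
    simp only [Finset.mem_filter] at ha ⊢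
    refine ⟨swap_mem_Ioc h hn ha.1, ?_⟩
    simp only [s, Equiv.Perm.mul_apply, Equiv.swap_apply_self]
    exact ha.2
  · intro a _; exact Equiv.swap_apply_self _ _ _
  · intro a _; exact Equiv.swap_apply_self _ _ _

/-- Let `w ∈ S_n` be dominant with `ℓ(w) < ℓ(w_∘) = n(n-1)/2`.  Then the set
`{1 ≤ i ≤ n-1 ∣ c_i(w) = c_{i+1}(w)}` is nonempty; letting `i₀` be its minimum and
`v := w s_{i₀}`, the permutation `v` is dominant, `ℓ(v) = ℓ(w) + 1`, and
`c_i(v) = c_i(w)` for `i ≠ i₀` while `c_{i₀}(v) = c_{i₀}(w) + 1`. -/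
theorem dominant_ascent (n : ℕ) (w : Equiv.Perm ℕ)
    (hsupp : ∀ j, j = 0 ∨ n < j → w j = j)
    (hdom : Dominant n w)
    (hlen : len n w < n * (n - 1) / 2) :
    {i : ℕ | 1 ≤ i ∧ i < n ∧ code n w i = code n w (i + 1)}.Nonempty ∧
    ∀ i₀, i₀ = sInf {i : ℕ | 1 ≤ i ∧ i < n ∧ code n w i = code n w (i + 1)} →
      Dominant n (w * s i₀) ∧
      len n (w * s i₀) = len n w + 1 ∧
      (∀ i, i ≠ i₀ → code n (w * s i₀) i = code n w i) ∧
      code n (w * s i₀) i₀ = code n w i₀ + 1 := by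
  set S := {i : ℕ | 1 ≤ i ∧ i < n ∧ code n w i = code n w (i + 1)} with hS
  have hne : S.Nonempty := by
    by_contra hemp
    rw [Set.not_nonempty_iff_eq_empty] at hemp
    have hstrict : ∀ i, 1 ≤ i → i < n → code n w (i + 1) + 1 ≤ code n w i := by
      intro i h1 h2
      have hni : i ∉ S := by rw [hemp]; exact Set.notMem_empty i
      have : code n w i ≠ code n w (i + 1) := fun hc => hni ⟨h1, h2, hc⟩
      have := hdom i h1 h2
      omega
    have hge : ∀ d i, 1 ≤ i → i + d = n → d ≤ code n w i := by
      intro d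
      induction d with
      | zero => intro i _ _; omega
      | succ d ih =>
        intro i h1 h2
        have h3 := ih (i + 1) (by omega) (by omega)
        have h4 := hstrict i h1 (by omega)
        omega
    have heqc : ∀ i ∈ Finset.Icc 1 n, code n w i = n - i := by
      intro i hi
      simp only [Finset.mem_Icc] at hi
      have := hge (n - i) i hi.1 (by omega)
      have := code_le n w i
      omega
    rw [len_eq_sum, Finset.sum_congr rfl heqc, sum_gauss] at hlen
    omega
  refine ⟨hne, fun i₀ hi₀ => ?_⟩
  have hmem : i₀ ∈ S := hi₀ ▸ Nat.sInf_mem hne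
  obtain ⟨h1, h2, heq⟩ := hmem
  have hn : i₀ + 1 ≤ n := h2
  have hmin : ∀ i, 1 ≤ i → i < i₀ → code n w (i + 1) + 1 ≤ code n w i := by
    intro i hi1 hi2
    have hni : i ∉ S := Nat.notMem_of_lt_sInf (hi₀ ▸ hi2)
    have : code n w i ≠ code n w (i + 1) := fun hc => hni ⟨hi1, by omega, hc⟩
    have := hdom i hi1 (by omega)
    omega
  -- w i₀ < w (i₀ + 1)
  have hlt : w i₀ < w (i₀ + 1) := by
    by_contra hge'
    push_neg at hge'
    have hne' : w (i₀ + 1) ≠ w i₀ := fun hc => by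
      have := w.injective hc; omega
    have hlt' : w (i₀ + 1) < w i₀ := lt_of_le_of_ne hge' hne'
    have h5 := code_succ n w hn
    rw [if_pos hlt'] at h5
    have hsub : ((Finset.Ioc (i₀ + 1) n).filter (fun j => w j < w (i₀ + 1))).card ≤
        ((Finset.Ioc (i₀ + 1) n).filter (fun j => w j < w i₀)).card := by
      apply Finset.card_le_card
      intro x hx
      simp only [Finset.mem_filter] at hx ⊢
      exact ⟨hx.1, lt_trans hx.2 hlt'⟩
    have : code n w (i₀ + 1) = ((Finset.Ioc (i₀ + 1) n).filter (fun j => w j < w (i₀ + 1))).card := rfl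
    omega
  set v := w * s i₀ with hv
  have hvi₀ : v i₀ = w (i₀ + 1) := by
    simp [hv, s, Equiv.Perm.mul_apply, Equiv.swap_apply_left]
  have hvi₁ : v (i₀ + 1) = w i₀ := by
    simp [hv, s, Equiv.Perm.mul_apply, Equiv.swap_apply_right]
  have hvfix : ∀ j, j ≠ i₀ → j ≠ i₀ + 1 → v j = w j := by
    intro j hj1 hj2
    simp [hv, s, Equiv.Perm.mul_apply, Equiv.swap_apply_of_ne_of_ne hj1 hj2]
  have hfilter : ∀ u : ℕ, (Finset.Ioc (i₀ + 1) n).filter (fun j => v j < u) =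
      (Finset.Ioc (i₀ + 1) n).filter (fun j => w j < u) := by
    intro u
    apply Finset.filter_congr
    intro j hj
    simp only [Finset.mem_Ioc] at hj
    rw [hvfix j (by omega) (by omega)]
  -- code of v at i₀
  have hci₀ : code n v i₀ = code n w i₀ + 1 := by
    rw [code_succ n v hn, hvi₀, hvi₁, if_pos hlt, hfilter]
    have : code n w (i₀ + 1) = ((Finset.Ioc (i₀ + 1) n).filter (fun j => w j < w (i₀ + 1))).card := rfl
    omega
  -- code of v at i₀ + 1
  have hci₁ : code n v (i₀ + 1) = code n w (i₀ + 1) := by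
    have h5 := code_succ n w hn
    rw [if_neg (by omega)] at h5
    unfold code
    rw [hvi₁, hfilter]
    have h6 : code n w (i₀ + 1)
        = ((Finset.Ioc (i₀ + 1) n).filter (fun j => w j < w (i₀ + 1))).card := rfl
    omega
  -- code of v elsewhere
  have hcother : ∀ i, i ≠ i₀ → code n v i = code n w i := by
    intro i hi
    rcases lt_or_gt_of_ne hi with hlt' | hgt
    · exact code_mul_swap_of_lt n w hlt' hn
    rcases eq_or_lt_of_le (Nat.succ_le_of_lt hgt) with h' | h'
    · rw [← h']; exact hci₁
    · unfold code
      rw [hvfix i (by omega) (by omega)]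
      apply congrArg
      apply Finset.filter_congr
      intro j hj
      simp only [Finset.mem_Ioc] at hj
      rw [hvfix j (by omega) (by omega)]
  have hcodes : ∀ i ∈ Finset.Icc 1 n, code n v i = code n w i + (if i = i₀ then 1 else 0) := by
    intro i _
    rcases eq_or_ne i i₀ with rfl | hi
    · rw [if_pos rfl]; exact hci₀
    · rw [if_neg hi, hcother i hi]; omega
  constructor
  · -- Dominant v
    intro i hi1 hi2
    rcases eq_or_ne i i₀ with rfl | hii
    · rw [hci₁, hci₀, ← heq]; omega
    rcases eq_or_ne (i + 1) i₀ with h' | h''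
    · rw [hcother i hii]
      have : code n v (i + 1) = code n w (i + 1) + 1 := by rw [h']; exact h' ▸ hci₀
      have := hmin i hi1 (by omega)
      omega
    · rw [hcother i hii, hcother (i + 1) h'']
      exact hdom i hi1 hi2
  refine ⟨?_, hcother, hci₀⟩
  rw [len_eq_sum, len_eq_sum, Finset.sum_congr rfl hcodes, Finset.sum_add_distrib,
    Finset.sum_ite_eq' (Finset.Icc 1 n) i₀ (fun _ => 1), if_pos (by simp [Finset.mem_Icc]; omega)]


end Stmt10
end

section
/- In the ring $R = \mathbb{Z}[x_1,\ldots,x_n, (1-y_1)^{\pm 1}, \ldots, (1-y_n)^{\pm 1}]$, let $I_n$ be the ideal generated by $e_i(1-x_1,\ldots,1-x_n) - e_i((1-y_1)^{-1},\ldots,(1-y_n)^{-1})$ for $i = 1, \ldots, n$, where $e_i$ is the $i$-th elementary symmetric polynomial. Then the element $\eta^n(x_1) := \prod_{j=1}^{n}(x_1 + y_j - x_1 y_j)$ belongs to $I_n$. -/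
namespace Stmt11

/-- The elementary symmetric function `e_k(z_1, …, z_n)` of a family of ring elements. -/
def esym {R : Type*} [CommRing R] {n : ℕ} (k : ℕ) (z : Fin n → R) : R :=
  ∑ J ∈ (Finset.univ : Finset (Fin n)).powersetCard k, ∏ j ∈ J, z j

lemma prod_add_esym {R : Type*} [CommRing R] {n : ℕ} (z : Fin n → R) (t : R) :
    ∏ j : Fin n, (z j + t) = ∑ k ∈ Finset.range (n + 1), esym k z * t ^ (n - k) := by
  rw [Finset.prod_add, Finset.powerset_card_disjiUnion]
  erw [Finset.sum_disjiUnion]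
  rw [show (Finset.univ : Finset (Fin n)).card = n by simp]
  refine Finset.sum_congr rfl fun k hk => ?_
  rw [esym, Finset.sum_mul]
  refine Finset.sum_congr rfl fun S hS => ?_
  rw [Finset.prod_const]
  congr 1
  rw [Finset.card_sdiff_of_subset (Finset.subset_univ S), Finset.card_univ, Fintype.card_fin,
    (Finset.mem_powersetCard.mp hS).2]

lemma esym_zero {R : Type*} [CommRing R] {n : ℕ} (z : Fin n → R) : esym 0 z = 1 := by
  simp [esym]

/-- In the ring `R = ℤ[x_1,…,x_n,(1-y_1)^{±1},…,(1-y_n)^{±1}]` — formalized as a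
commutative ring containing elements `x i`, `y i` such that each `1 - y i` is invertible
with inverse `u i` — let `I_n` be the ideal generated by
`e_i(1-x_1,…,1-x_n) - e_i((1-y_1)^{-1},…,(1-y_n)^{-1})`, `i = 1, …, n`.
Then `η^n(x_1) = ∏_{j=1}^n (x_1 + y_j - x_1 y_j)` belongs to `I_n`. -/
theorem eta_mem_ideal {R : Type*} [CommRing R] {n : ℕ} (hn : 1 ≤ n)
    (x y u : Fin n → R) (hu : ∀ j, (1 - y j) * u j = 1) :
    (∏ j : Fin n, (x ⟨0, hn⟩ + y j - x ⟨0, hn⟩ * y j)) ∈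
      Ideal.span (Set.range fun i : Fin n =>
        esym ((i : ℕ) + 1) (fun j => 1 - x j) - esym ((i : ℕ) + 1) u) := by
  set x1 : R := x ⟨0, hn⟩ with hx1
  set I := Ideal.span (Set.range fun i : Fin n =>
        esym ((i : ℕ) + 1) (fun j => 1 - x j) - esym ((i : ℕ) + 1) u) with hI
  set a : Fin n → R := fun j => 1 - x j with ha
  have hfac : ∀ j, (1 - y j) * (u j + (-(1 - x1))) = x1 + y j - x1 * y j := by
    intro j
    linear_combination hu j
  have key : (∏ j : Fin n, (x1 + y j - x1 * y j)) =
      (∏ j : Fin n, (1 - y j)) * ∏ j : Fin n, (u j + (-(1 - x1))) := by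
    rw [← Finset.prod_mul_distrib]
    exact Finset.prod_congr rfl fun j _ => (hfac j).symm
  have hzero : (∏ j : Fin n, (a j + (-(1 - x1)))) = 0 :=
    Finset.prod_eq_zero (Finset.mem_univ ⟨0, hn⟩) (by simp [ha, hx1])
  have hmem : ∀ k ∈ Finset.range (n + 1), (esym k u - esym k a) * (-(1 - x1)) ^ (n - k) ∈ I := by
    intro k hk
    rcases Nat.eq_zero_or_pos k with rfl | hpos
    · rw [esym_zero, esym_zero, sub_self, zero_mul]; exact I.zero_mem
    · refine Ideal.mul_mem_right _ _ ?_
      have hkr := Finset.mem_range.mp hk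
      have hk' : k - 1 < n := by omega
      have : esym ((⟨k - 1, hk'⟩ : Fin n) : ℕ).succ a - esym ((⟨k - 1, hk'⟩ : Fin n) : ℕ).succ u
          ∈ I := Ideal.subset_span ⟨⟨k - 1, hk'⟩, rfl⟩
      have hks : ((⟨k - 1, hk'⟩ : Fin n) : ℕ) + 1 = k := by simp only [Fin.val_mk]; omega
      rw [← neg_sub]
      refine neg_mem ?_
      simpa [Nat.succ_eq_add_one, hks] using this
  have hdiff : (∏ j : Fin n, (u j + (-(1 - x1)))) ∈ I := by
    have : (∏ j : Fin n, (u j + (-(1 - x1)))) - (∏ j : Fin n, (a j + (-(1 - x1)))) ∈ I := by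
      rw [prod_add_esym, prod_add_esym, ← Finset.sum_sub_distrib]
      refine Ideal.sum_mem _ fun k hk => ?_
      rw [← sub_mul]
      exact hmem k hk
    rwa [hzero, sub_zero] at this
  rw [key]
  exact Ideal.mul_mem_left _ _ hdiff

end Stmt11
end

section
/- Let $\mathfrak{g}$ be a finite-dimensional simple Lie algebra with highest root $\theta$ and fundamental weights $\varpi_i$. If $\beta$ is a quantum root (i.e., $\ell(s_\beta) = 2\langle\rho,\beta^\vee\rangle - 1$), then $\theta^\vee - \beta^\vee$ is a nonnegative integer combination of simple coroots. -/
set_option linter.unusedSectionVars false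

namespace Stmt13

variable {ι : Type*} [Fintype ι] [DecidableEq ι]

/-- The pairing `⟨v, c⟩ = ∑_{i,j} v_i c_j ⟨α_i, α_j^∨⟩`, where `v` is written in
simple-root coordinates, `c` in simple-coroot coordinates, and
`C i j = ⟨α_i, α_j^∨⟩` is (the transpose of) the Cartan matrix. -/
def pairing (C : ι → ι → ℤ) (v c : ι → ℤ) : ℤ :=
  ∑ i, ∑ j, v i * c j * C i j

/-- The reflection `s_β v = v - ⟨v, β^∨⟩ β`. -/
def refl (C : ι → ι → ℤ) (coroot : (ι → ℤ) → (ι → ℤ)) (β v : ι → ℤ) : ι → ℤ :=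
  v - pairing C v (coroot β) • β

section Aux

variable (C : ι → ι → ℤ) (coroot : (ι → ℤ) → (ι → ℤ))

lemma pairing_add_left (v w c : ι → ℤ) :
    pairing C (v + w) c = pairing C v c + pairing C w c := by
  simp [pairing, add_mul, Finset.sum_add_distrib]

lemma pairing_sub_left (v w c : ι → ℤ) :
    pairing C (v - w) c = pairing C v c - pairing C w c := by
  simp [pairing, sub_mul, Finset.sum_sub_distrib]

lemma pairing_smul_left (n : ℤ) (v c : ι → ℤ) :
    pairing C (n • v) c = n * pairing C v c := by
  simp only [pairing, Pi.smul_apply, smul_eq_mul, Finset.mul_sum, mul_assoc]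

lemma pairing_neg_left (v c : ι → ℤ) :
    pairing C (-v) c = - pairing C v c := by
  simp [pairing, Finset.sum_neg_distrib]

lemma pairing_zero_left (c : ι → ℤ) : pairing C 0 c = 0 := by
  simp [pairing]

lemma pairing_single_left (i : ι) (c : ι → ℤ) :
    pairing C (Pi.single i 1) c = ∑ j, c j * C i j := by
  unfold pairing
  rw [Finset.sum_eq_single_of_mem i (Finset.mem_univ i)]
  · simp
  · intro b _ hb
    simp [Pi.single_eq_of_ne hb]

lemma pairing_single_single (i j : ι) :
    pairing C (Pi.single i 1) (Pi.single j 1) = C i j := by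
  rw [pairing_single_left]
  rw [Finset.sum_eq_single_of_mem j (Finset.mem_univ j)]
  · simp
  · intro b _ hb
    simp [Pi.single_eq_of_ne hb]

lemma refl_add (β v w : ι → ℤ) :
    refl C coroot β (v + w) = refl C coroot β v + refl C coroot β w := by
  simp only [refl, pairing_add_left, add_smul]
  abel

lemma refl_invol (β : ι → ℤ) (h2 : pairing C β (coroot β) = 2) (v : ι → ℤ) :
    refl C coroot β (refl C coroot β v) = v := by
  have h : pairing C (refl C coroot β v) (coroot β) = -(pairing C v (coroot β)) := by
    rw [refl, pairing_sub_left, pairing_smul_left, h2]; ring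
  rw [refl, h, refl, neg_smul, sub_neg_eq_add]
  abel

lemma refl_pairing_neg (β v : ι → ℤ) (h2 : pairing C β (coroot β) = 2) :
    pairing C (refl C coroot β v) (coroot β) = -(pairing C v (coroot β)) := by
  rw [refl, pairing_sub_left, pairing_smul_left, h2]; ring

/-- decomposition of a vector into single coordinates -/
lemma decomp (x : ι → ℤ) : x = ∑ i, x i • (Pi.single i 1 : ι → ℤ) := by
  ext j
  rw [Finset.sum_apply]
  rw [Finset.sum_eq_single_of_mem j (Finset.mem_univ j)]
  · simp
  · intro b _ hb
    simp [Pi.single_eq_of_ne (Ne.symm hb)]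

/-- Existence of an invariant positive-definite symmetric bilinear form. -/
lemma exists_form (Δp : Finset (ι → ℤ))
    (hsimple : ∀ i, (Pi.single i 1 : ι → ℤ) ∈ Δp)
    (hcoroot2 : ∀ β ∈ Δp, pairing C β (coroot β) = 2)
    (hrefl : ∀ β ∈ Δp, ∀ γ ∈ Δp, refl C coroot β γ ∈ Δp ∨ -refl C coroot β γ ∈ Δp) :
    ∃ B : (ι → ℤ) → (ι → ℤ) → ℤ,
      (∀ x y, B x y = B y x) ∧
      (∀ x y z, B (x + y) z = B x z + B y z) ∧
      (∀ (n : ℤ) (x y : ι → ℤ), B (n • x) y = n * B x y) ∧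
      (∀ x, x ≠ 0 → 0 < B x x) ∧
      (∀ β ∈ Δp, ∀ x y, B (refl C coroot β x) (refl C coroot β y) = B x y) := by
  classical
  set σ : (ι → ℤ) → AddMonoid.End (ι → ℤ) :=
    fun β => AddMonoidHom.mk' (refl C coroot β) (refl_add C coroot β) with hσ
  have σ_apply : ∀ β v, σ β v = refl C coroot β v := fun _ _ => rfl
  set S : Set (AddMonoid.End (ι → ℤ)) := {g | ∃ β ∈ Δp, g = σ β} with hS
  set G : Submonoid (AddMonoid.End (ι → ℤ)) := Submonoid.closure S with hG
  set D : Finset (ι → ℤ) := Δp ∪ Δp.image (fun v => -v) with hD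
  have hGD : ∀ g ∈ G, ∀ v ∈ D, g v ∈ D := by
    intro g hg
    induction hg using Submonoid.closure_induction with
    | mem x hx =>
      rcases hx with ⟨β, hβ, rfl⟩
      intro v hv
      rcases Finset.mem_union.mp hv with hv | hv
      · rcases hrefl β hβ v hv with h | h
        · exact Finset.mem_union_left _ h
        · exact Finset.mem_union_right _ (Finset.mem_image.mpr ⟨_, h, neg_neg _⟩)
      · rcases Finset.mem_image.mp hv with ⟨w, hw, rfl⟩
        have hmn : σ β (-w) = -(σ β w) := map_neg _ _
        rw [hmn]
        rcases hrefl β hβ w hw with h | h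
        · exact Finset.mem_union_right _ (Finset.mem_image.mpr ⟨_, h, rfl⟩)
        · have : -(σ β w) ∈ Δp := h
          exact Finset.mem_union_left _ this
    | one => intro v hv; simpa using hv
    | mul x y hx hy ihx ihy =>
      intro v hv
      have hxy : (x * y) v = x (y v) := rfl
      rw [hxy]
      exact ihx _ (ihy v hv)
  have hσG : ∀ β ∈ Δp, σ β ∈ G := fun β hβ => Submonoid.subset_closure ⟨β, hβ, rfl⟩
  have hσσ : ∀ β ∈ Δp, σ β * σ β = 1 := by
    intro β hβ
    refine DFunLike.ext _ _ fun v => ?_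
    exact refl_invol C coroot β (hcoroot2 β hβ) v
  have hsingleD : ∀ i, (Pi.single i 1 : ι → ℤ) ∈ D :=
    fun i => Finset.mem_union_left _ (hsimple i)
  have hval : ∀ g ∈ G, ∀ g' ∈ G, (∀ v ∈ D, g v = g' v) → g = g' := by
    intro g hg g' hg' h
    refine DFunLike.ext _ _ fun x => ?_
    have hx := decomp x
    calc g x = g (∑ i, x i • (Pi.single i 1 : ι → ℤ)) := by rw [← hx]
      _ = ∑ i, x i • g (Pi.single i 1) := by rw [map_sum]; simp_rw [map_zsmul]
      _ = ∑ i, x i • g' (Pi.single i 1) := by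
            refine Finset.sum_congr rfl fun i _ => ?_
            rw [h _ (hsingleD i)]
      _ = g' (∑ i, x i • (Pi.single i 1 : ι → ℤ)) := by rw [map_sum]; simp_rw [map_zsmul]
      _ = g' x := by rw [← hx]
  have hfin : (G : Set (AddMonoid.End (ι → ℤ))).Finite := by
    rw [← Set.finite_coe_iff]
    apply Finite.of_injective
      (fun (g : G) => (fun (d : D) => (⟨g.1 d.1, hGD g.1 g.2 d.1 d.2⟩ : D)))
    intro g g' hgg
    apply Subtype.ext
    apply hval _ g.2 _ g'.2
    intro v hv
    have := congrFun hgg ⟨v, hv⟩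
    exact Subtype.ext_iff.mp this
  set GF : Finset (AddMonoid.End (ι → ℤ)) := hfin.toFinset with hGFdef
  have hGF : ∀ g, g ∈ GF ↔ g ∈ G := fun g => hfin.mem_toFinset
  set dot : (ι → ℤ) → (ι → ℤ) → ℤ := fun x y => ∑ i, x i * y i with hdot
  refine ⟨fun x y => ∑ g ∈ GF, dot (g x) (g y), ?_, ?_, ?_, ?_, ?_⟩
  · intro x y
    refine Finset.sum_congr rfl fun g _ => ?_
    exact Finset.sum_congr rfl fun i _ => mul_comm _ _
  · intro x y z
    rw [← Finset.sum_add_distrib]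
    refine Finset.sum_congr rfl fun g _ => ?_
    simp only [hdot, map_add, Pi.add_apply, add_mul, Finset.sum_add_distrib]
  · intro n x y
    rw [Finset.mul_sum]
    refine Finset.sum_congr rfl fun g _ => ?_
    simp only [hdot, map_zsmul, Pi.smul_apply, smul_eq_mul, Finset.mul_sum, mul_assoc]
  · intro x hx
    have h1 : (1 : AddMonoid.End (ι → ℤ)) ∈ GF := (hGF 1).mpr (one_mem G)
    have hterm : ∀ g ∈ GF, 0 ≤ dot (g x) (g x) :=
      fun g _ => Finset.sum_nonneg fun i _ => mul_self_nonneg _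
    have hex : ∃ i, x i ≠ 0 := by
      by_contra hcon
      push_neg at hcon
      exact hx (funext hcon)
    obtain ⟨i, hi⟩ := hex
    have hxx : 0 < dot x x := by
      calc (0:ℤ) < x i * x i := mul_self_pos.mpr hi
        _ ≤ dot x x := Finset.single_le_sum (fun j _ => mul_self_nonneg (x j)) (Finset.mem_univ i)
    have h1x : dot ((1 : AddMonoid.End (ι → ℤ)) x) ((1 : AddMonoid.End (ι → ℤ)) x) = dot x x := rfl
    calc (0:ℤ) < dot x x := hxx
      _ = dot ((1 : AddMonoid.End (ι → ℤ)) x) ((1 : AddMonoid.End (ι → ℤ)) x) := h1x.symm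
      _ ≤ ∑ g ∈ GF, dot (g x) (g x) := Finset.single_le_sum hterm h1
  · intro β hβ x y
    refine Finset.sum_nbij' (fun g => g * σ β) (fun g => g * σ β) ?_ ?_ ?_ ?_ ?_
    · intro a ha
      exact (hGF _).mpr (mul_mem ((hGF a).mp ha) (hσG β hβ))
    · intro a ha
      exact (hGF _).mpr (mul_mem ((hGF a).mp ha) (hσG β hβ))
    · intro a _
      show (a * σ β) * σ β = a
      rw [mul_assoc, hσσ β hβ, mul_one]
    · intro a _
      show (a * σ β) * σ β = a
      rw [mul_assoc, hσσ β hβ, mul_one]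
    · intro a _
      rfl
  
section Form

variable (B : (ι → ℤ) → (ι → ℤ) → ℤ)
variable (hsymm : ∀ x y, B x y = B y x)
variable (haddl : ∀ x y z, B (x + y) z = B x z + B y z)
variable (hsmull : ∀ (n : ℤ) (x y : ι → ℤ), B (n • x) y = n * B x y)

include hsymm haddl hsmull

lemma form_subl (x y z : ι → ℤ) : B (x - y) z = B x z - B y z := by
  have h : x - y = x + (-1 : ℤ) • y := by
    rw [neg_one_zsmul]; abel
  rw [h, haddl, hsmull]; ring

lemma form_negl (x y : ι → ℤ) : B (-x) y = -(B x y) := by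
  have h : (-x : ι → ℤ) = (-1 : ℤ) • x := by rw [neg_one_zsmul]
  rw [h, hsmull]; ring

lemma form_zerol (y : ι → ℤ) : B 0 y = 0 := by
  have h : (0 : ι → ℤ) = (0 : ℤ) • (0 : ι → ℤ) := by simp
  rw [h, hsmull]; ring

lemma form_sum_left {s : Finset ι} (f : ι → (ι → ℤ)) (y : ι → ℤ) :
    B (∑ i ∈ s, f i) y = ∑ i ∈ s, B (f i) y := by
  classical
  induction s using Finset.induction_on with
  | empty => simpa using form_zerol B hsymm haddl hsmull y
  | @insert a s hnotmem ih =>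
    rw [Finset.sum_insert hnotmem, Finset.sum_insert hnotmem, haddl, ih]

lemma form_decomp (x y : ι → ℤ) :
    B x y = ∑ i, x i * B (Pi.single i 1) y := by
  conv_lhs => rw [decomp x]
  rw [form_sum_left B hsymm haddl hsmull]
  exact Finset.sum_congr rfl fun i _ => hsmull _ _ _

lemma form_refl_val (C : ι → ι → ℤ) (coroot : (ι → ℤ) → (ι → ℤ)) (δ γ x : ι → ℤ) :
    B (refl C coroot δ γ) x = B γ x - pairing C γ (coroot δ) * B δ x := by
  rw [refl, form_subl B hsymm haddl hsmull, hsmull]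

end Form

/-- `⟨x, δ^∨⟩ · B(δ,δ) = 2 B(x,δ)` for roots `δ`. -/
lemma form_pairing (Δp : Finset (ι → ℤ))
    (hcoroot2 : ∀ β ∈ Δp, pairing C β (coroot β) = 2)
    (B : (ι → ℤ) → (ι → ℤ) → ℤ)
    (hsymm : ∀ x y, B x y = B y x)
    (haddl : ∀ x y z, B (x + y) z = B x z + B y z)
    (hsmull : ∀ (n : ℤ) (x y : ι → ℤ), B (n • x) y = n * B x y)
    (hinv : ∀ β ∈ Δp, ∀ x y, B (refl C coroot β x) (refl C coroot β y) = B x y) :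
    ∀ δ ∈ Δp, ∀ x, pairing C x (coroot δ) * B δ δ = 2 * B x δ := by
  intro δ hδ x
  have hδδ : refl C coroot δ δ = -δ := by
    rw [refl, hcoroot2 δ hδ, two_zsmul]; abel
  have h := hinv δ hδ x δ
  rw [hδδ] at h
  have h2 : B (refl C coroot δ x) (-δ) = -(B (refl C coroot δ x) δ) := by
    rw [hsymm, form_negl B hsymm haddl hsmull, hsymm]
  rw [h2] at h
  have h3 := form_refl_val B hsymm haddl hsmull C coroot δ x δ
  rw [h3] at h
  linarith

/-- coordinate formula: `(coroot δ)_j · B(δ,δ) = δ_j · B(e_j, e_j)`. -/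
lemma form_coord (Δp : Finset (ι → ℤ))
    (hsimple : ∀ i, (Pi.single i 1 : ι → ℤ) ∈ Δp)
    (hcoroot2 : ∀ β ∈ Δp, pairing C β (coroot β) = 2)
    (hcoroot_simple : ∀ i, coroot (Pi.single i 1) = Pi.single i 1)
    (B : (ι → ℤ) → (ι → ℤ) → ℤ)
    (hsymm : ∀ x y, B x y = B y x)
    (haddl : ∀ x y z, B (x + y) z = B x z + B y z)
    (hsmull : ∀ (n : ℤ) (x y : ι → ℤ), B (n • x) y = n * B x y)
    (hposd : ∀ x, x ≠ 0 → 0 < B x x)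
    (hinv : ∀ β ∈ Δp, ∀ x y, B (refl C coroot β x) (refl C coroot β y) = B x y) :
    ∀ δ ∈ Δp, ∀ j, coroot δ j * B δ δ = δ j * B (Pi.single j 1) (Pi.single j 1) := by
  intro δ hδ j
  classical
  have key1 := form_pairing C coroot Δp hcoroot2 B hsymm haddl hsmull hinv
  set bjj : ι → ℤ := fun k => B (Pi.single k 1) (Pi.single k 1) with hbjjdef
  have hbjjpos : ∀ k, 0 < bjj k := by
    intro k
    apply hposd
    intro hc
    have := congrFun hc k
    simp at this
  set T : ℤ := B δ δ with hT
  have hCB : ∀ i k, C i k * bjj k = 2 * B (Pi.single i 1) (Pi.single k 1) := by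
    intro i k
    have := key1 (Pi.single k 1) (hsimple k) (Pi.single i 1)
    rwa [hcoroot_simple k, pairing_single_single] at this
  have hPair : ∀ x, pairing C x (coroot δ) * T = 2 * B x δ := fun x => key1 δ hδ x
  set u : ι → ℤ := fun k =>
    (coroot δ k * T - δ k * bjj k) * ∏ m ∈ Finset.univ.erase k, bjj m with hu
  have hBiu : ∀ i, B (Pi.single i 1) u = 0 := by
    intro i
    have hexp : B (Pi.single i 1) u = ∑ k, u k * B (Pi.single i 1) (Pi.single k 1) := by
      rw [hsymm, form_decomp B hsymm haddl hsmull]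
      exact Finset.sum_congr rfl fun k _ => by rw [hsymm]
    have h2exp : 2 * B (Pi.single i 1) u
        = ∑ k, u k * (C i k * bjj k) := by
      rw [hexp, Finset.mul_sum]
      refine Finset.sum_congr rfl fun k _ => ?_
      rw [hCB i k]; ring
    set P : ℤ := ∏ m, bjj m with hP
    have hPk : ∀ k, (∏ m ∈ Finset.univ.erase k, bjj m) * bjj k = P := by
      intro k
      exact Finset.prod_erase_mul _ _ (Finset.mem_univ k)
    have hterm : ∀ k, u k * (C i k * bjj k)
        = P * (coroot δ k * C i k) * T - P * (δ k * (C i k * bjj k)) := by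
      intro k
      have huk : u k = (coroot δ k * T - δ k * bjj k) * ∏ m ∈ Finset.univ.erase k, bjj m := rfl
      rw [huk]
      linear_combination ((coroot δ k * T - δ k * bjj k) * C i k) * hPk k
    have hsum1 : ∑ k, coroot δ k * C i k = pairing C (Pi.single i 1) (coroot δ) := by
      rw [pairing_single_left]
    have hsum2 : ∑ k, δ k * (C i k * bjj k) = 2 * B (Pi.single i 1) δ := by
      have hd : B (Pi.single i 1) δ = ∑ k, δ k * B (Pi.single i 1) (Pi.single k 1) := by
        rw [hsymm, form_decomp B hsymm haddl hsmull]
        exact Finset.sum_congr rfl fun k _ => by rw [hsymm]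
      rw [hd, Finset.mul_sum]
      exact Finset.sum_congr rfl fun k _ => by rw [hCB i k]; ring
    have hzero : 2 * B (Pi.single i 1) u = 0 := by
      rw [h2exp]
      calc ∑ k, u k * (C i k * bjj k)
          = ∑ k, (P * (coroot δ k * C i k) * T - P * (δ k * (C i k * bjj k))) :=
            Finset.sum_congr rfl fun k _ => hterm k
        _ = P * T * (∑ k, coroot δ k * C i k) - P * (∑ k, δ k * (C i k * bjj k)) := by
            rw [Finset.sum_sub_distrib, Finset.mul_sum, Finset.mul_sum]
            congr 1
            · exact Finset.sum_congr rfl fun k _ => by ring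
        _ = P * T * pairing C (Pi.single i 1) (coroot δ) - P * (2 * B (Pi.single i 1) δ) := by
            rw [hsum1, hsum2]
        _ = P * (pairing C (Pi.single i 1) (coroot δ) * T) - P * (2 * B (Pi.single i 1) δ) := by
            ring
        _ = 0 := by rw [hPair]; ring
    omega
  have hBuu : B u u = 0 := by
    rw [form_decomp B hsymm haddl hsmull]
    refine Finset.sum_eq_zero fun i _ => ?_
    rw [hBiu i]; ring
  have hu0 : u = 0 := by
    by_contra hc
    have := hposd u hc
    omega
  have huj := congrFun hu0 j
  have hPjpos : 0 < ∏ m ∈ Finset.univ.erase j, bjj m :=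
    Finset.prod_pos fun m _ => hbjjpos m
  have : (coroot δ j * T - δ j * bjj j) = 0 := by
    rcases mul_eq_zero.mp huj with h | h
    · exact h
    · omega
  linarith

/-- The quantum condition forces: positive roots pairing `≥ 2` against `β^∨` stay positive. -/
lemma quantum_closed (Δp : Finset (ι → ℤ))
    (hpos : ∀ v ∈ Δp, ∀ i, 0 ≤ v i)
    (hcoroot2 : ∀ β ∈ Δp, pairing C β (coroot β) = 2)
    (hrefl : ∀ β ∈ Δp, ∀ γ ∈ Δp, refl C coroot β γ ∈ Δp ∨ -refl C coroot β γ ∈ Δp)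
    (β : ι → ℤ) (hβ : β ∈ Δp)
    (hquantum : ((Δp.filter (fun γ => refl C coroot β γ ∉ Δp)).card : ℤ) =
      (∑ γ ∈ Δp, pairing C γ (coroot β)) - 1) :
    ∀ γ ∈ Δp, γ ≠ β → 2 ≤ pairing C γ (coroot β) → refl C coroot β γ ∈ Δp := by
  classical
  intro γ0 hγ0 hne h2
  by_contra hout
  set f : (ι → ℤ) → ℤ := fun γ => pairing C γ (coroot β) with hf
  have h0 : (0 : ι → ℤ) ∉ Δp := by
    intro h
    have h2' := hcoroot2 0 h
    rw [pairing_zero_left] at h2'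
    omega
  have hposc : ∀ v ∈ Δp, ∃ i, 1 ≤ v i := by
    intro v hv
    have hv0 : v ≠ 0 := fun h => h0 (h ▸ hv)
    have : ∃ i, v i ≠ 0 := by
      by_contra hc; push_neg at hc; exact hv0 (funext hc)
    obtain ⟨i, hi⟩ := this
    have := hpos v hv i
    exact ⟨i, by omega⟩
  set A := Δp.filter (fun γ => refl C coroot β γ ∉ Δp) with hA
  have hzero : ∑ γ ∈ Δp.filter (fun γ => ¬ (refl C coroot β γ ∉ Δp)), f γ = 0 := by
    refine Finset.sum_involution (fun γ _ => refl C coroot β γ) ?_ ?_ ?_ ?_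
    · intro a _
      have hrp := refl_pairing_neg C coroot β a (hcoroot2 β hβ)
      show f a + f (refl C coroot β a) = 0
      rw [hf]
      simp only []
      rw [hrp]
      ring
    · intro a _ hfa heq
      have hsub : a - f a • β = a := heq
      have hzz : f a • β = 0 := by
        have := sub_eq_self.mp hsub
        exact this
      obtain ⟨i, hi⟩ := hposc β hβ
      have := congrFun hzz i
      simp only [Pi.smul_apply, smul_eq_mul, Pi.zero_apply] at this
      have : f a = 0 := by
        rcases mul_eq_zero.mp this with h | h
        · exact h
        · omega
      exact hfa this
    · intro a ha
      rw [Finset.mem_filter] at ha ⊢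
      refine ⟨not_not.mp ha.2, ?_⟩
      rw [refl_invol C coroot β (hcoroot2 β hβ)]
      exact not_not.mpr ha.1
    · intro a _
      exact refl_invol C coroot β (hcoroot2 β hβ) a
  have hsplit : ∑ γ ∈ Δp, f γ = ∑ γ ∈ A, f γ := by
    rw [← Finset.sum_filter_add_sum_filter_not Δp (fun γ => refl C coroot β γ ∉ Δp) f,
      hzero, add_zero]
  have hge1 : ∀ γ ∈ A, 1 ≤ f γ := by
    intro γ hγ
    rw [hA, Finset.mem_filter] at hγ
    rcases hrefl β hβ γ hγ.1 with h | h
    · exact absurd h hγ.2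
    · obtain ⟨i, hi⟩ := hposc γ hγ.1
      have hh := hpos _ h i
      have hexp : (-(refl C coroot β γ)) i = f γ * β i - γ i := by
        simp [refl, hf]
      rw [hexp] at hh
      have hβi := hpos β hβ i
      by_contra hcon
      push_neg at hcon
      nlinarith
  have hβA : β ∈ A := by
    rw [hA, Finset.mem_filter]
    refine ⟨hβ, ?_⟩
    have hrβ : refl C coroot β β = -β := by
      rw [refl, hcoroot2 β hβ, two_zsmul]; abel
    rw [hrβ]
    intro hmem
    obtain ⟨i, hi⟩ := hposc β hβ
    have := hpos _ hmem i
    simp only [Pi.neg_apply] at this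
    omega
  have hγA : γ0 ∈ A := by
    rw [hA, Finset.mem_filter]; exact ⟨hγ0, hout⟩
  have hγe : γ0 ∈ A.erase β := Finset.mem_erase.mpr ⟨hne, hγA⟩
  have hsum : ∑ γ ∈ A, f γ = f β + (f γ0 + ∑ γ ∈ (A.erase β).erase γ0, f γ) := by
    rw [Finset.add_sum_erase _ f hγe, Finset.add_sum_erase _ f hβA]
  have hbound : (((A.erase β).erase γ0).card : ℤ) ≤ ∑ γ ∈ (A.erase β).erase γ0, f γ := by
    have := Finset.card_nsmul_le_sum ((A.erase β).erase γ0) f 1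
      (fun x hx => hge1 x (Finset.mem_of_mem_erase (Finset.mem_of_mem_erase hx)))
    simpa using this
  have hc1 : (A.erase β).card + 1 = A.card := Finset.card_erase_add_one hβA
  have hc2 : ((A.erase β).erase γ0).card + 1 = (A.erase β).card :=
    Finset.card_erase_add_one hγe
  have hfβ : f β = 2 := hcoroot2 β hβ
  have hq : (A.card : ℤ) = ∑ γ ∈ A, f γ - 1 := by
    rw [← hsplit]
    exact hquantum
  rw [hsum, hfβ] at hq
  have : ((A.card : ℤ)) = (((A.erase β).erase γ0).card : ℤ) + 2 := by
    push_cast [← hc1, ← hc2]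
    ring
  have h2' : 2 ≤ f γ0 := h2
  omega

/-- There is a positive root of the same `B`-length as `θ` pairing positively with `β`. -/
lemma exists_same_length (Δp : Finset (ι → ℤ))
    (hpos : ∀ v ∈ Δp, ∀ i, 0 ≤ v i)
    (hsimple : ∀ i, (Pi.single i 1 : ι → ℤ) ∈ Δp)
    (hcoroot2 : ∀ β ∈ Δp, pairing C β (coroot β) = 2)
    (hcoroot_simple : ∀ i, coroot (Pi.single i 1) = Pi.single i 1)
    (hrefl : ∀ β ∈ Δp, ∀ γ ∈ Δp, refl C coroot β γ ∈ Δp ∨ -refl C coroot β γ ∈ Δp)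
    (θ : ι → ℤ) (hθ : θ ∈ Δp) (hθ1 : ∀ j, 1 ≤ θ j)
    (β : ι → ℤ) (hβ : β ∈ Δp)
    (B : (ι → ℤ) → (ι → ℤ) → ℤ)
    (hsymm : ∀ x y, B x y = B y x)
    (haddl : ∀ x y z, B (x + y) z = B x z + B y z)
    (hsmull : ∀ (n : ℤ) (x y : ι → ℤ), B (n • x) y = n * B x y)
    (hposd : ∀ x, x ≠ 0 → 0 < B x x)
    (hinv : ∀ β ∈ Δp, ∀ x y, B (refl C coroot β x) (refl C coroot β y) = B x y) :
    ∃ γ ∈ Δp, B γ γ = B θ θ ∧ 0 < B γ β := by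
  classical
  have key1 := form_pairing C coroot Δp hcoroot2 B hsymm haddl hsmull hinv
  have hsub := form_subl B hsymm haddl hsmull
  have hnegl := form_negl B hsymm haddl hsmull
  have hreflval := form_refl_val B hsymm haddl hsmull C coroot
  have h0 : (0 : ι → ℤ) ∉ Δp := by
    intro h
    have h2' := hcoroot2 0 h
    rw [pairing_zero_left] at h2'
    omega
  have hTpos : ∀ δ ∈ Δp, 0 < B δ δ := fun δ hδ => hposd δ (fun h => h0 (h ▸ hδ))
  by_contra hno
  push_neg at hno
  -- first: every same-length root is B-orthogonal to β
  have hperp : ∀ γ ∈ Δp, B γ γ = B θ θ → B γ β = 0 := by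
    intro γ hγ hγL
    rcases lt_trichotomy (B γ β) 0 with hlt | heq | hgt
    · -- positivize using the reflection in β
      exfalso
      set p : ℤ := pairing C γ (coroot β) with hp
      have hpB : p * B β β = 2 * B γ β := key1 β hβ γ
      have hppos : p < 0 := by nlinarith [hTpos β hβ]
      set γ' : ι → ℤ := refl C coroot β γ with hγ'
      have hγ'Δ : γ' ∈ Δp := by
        rcases hrefl β hβ γ hγ with h | h
        · exact h
        · exfalso
          have hγ'nonneg : ∀ i, 0 ≤ γ' i := by
            intro i
            have h1 := hpos γ hγ i
            have h2 := hpos β hβ i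
            have : γ' i = γ i - p * β i := rfl
            rw [this]
            nlinarith
          have hγ'0 : γ' = 0 := by
            funext i
            have h1 := hγ'nonneg i
            have h2 := hpos _ h i
            simp only [Pi.neg_apply] at h2
            have h3 : γ' i = refl C coroot β γ i := rfl
            show γ' i = 0
            omega
          have hmem : -γ' ∈ Δp := by rw [hγ']; exact h
          rw [hγ'0] at hmem
          simp only [neg_zero] at hmem
          exact h0 hmem
      have hlen : B γ' γ' = B θ θ := by
        have := hinv β hβ γ γ
        rw [← hγ'] at this
        rw [this, hγL]
      have hval : B γ' β = -(B γ β) := by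
        have := hreflval β γ β
        rw [← hγ'] at this
        rw [this, ← hp]
        linarith [hpB]
      have := hno γ' hγ'Δ hlen
      rw [hval] at this
      omega
    · exact heq
    · exact absurd hgt (by simpa using hno γ hγ hγL)
  -- the set of coordinates orthogonal to all same-length roots
  set S : Finset ι := Finset.univ.filter
    (fun i => ∀ γ ∈ Δp, B γ γ = B θ θ → B γ (Pi.single i 1) = 0) with hS
  -- reflections by simple roots preserve the same-length set up to sign
  have hLB : ∀ (i : ι) (γ : ι → ℤ), γ ∈ Δp → B γ γ = B θ θ → ∀ x : ι → ℤ,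
      (∀ γ'' ∈ Δp, B γ'' γ'' = B θ θ → B γ'' x = 0) →
      B (refl C coroot (Pi.single i 1) γ) x = 0 := by
    intro i γ hγ hγL x hx
    rcases hrefl (Pi.single i 1) (hsimple i) γ hγ with h | h
    · have hlen : B (refl C coroot (Pi.single i 1) γ) (refl C coroot (Pi.single i 1) γ)
          = B θ θ := by rw [hinv _ (hsimple i) γ γ, hγL]
      exact hx _ h hlen
    · have hlen : B (-(refl C coroot (Pi.single i 1) γ)) (-(refl C coroot (Pi.single i 1) γ))
          = B θ θ := by
        rw [hnegl, hsymm, hnegl, hsymm]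
        simp only [neg_neg]
        rw [hinv _ (hsimple i) γ γ, hγL]
      have := hx _ h hlen
      rw [hnegl] at this
      omega
  -- orthogonality propagation between S and its complement
  have hSstep : ∀ i, i ∉ S → ∀ a ∈ S, B (Pi.single a 1) (Pi.single i 1) = 0 := by
    intro i hi a ha
    rw [hS, Finset.mem_filter] at hi
    push_neg at hi
    obtain ⟨γ, hγ, hγL, hBγi⟩ := hi (Finset.mem_univ i)
    set c : ℤ := pairing C γ (coroot (Pi.single i 1)) with hc
    have hcB : c * B (Pi.single i 1) (Pi.single i 1) = 2 * B γ (Pi.single i 1) :=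
      key1 (Pi.single i 1) (hsimple i) γ
    have hcne : c ≠ 0 := by
      intro h
      rw [h] at hcB
      omega
    have haS : ∀ γ'' ∈ Δp, B γ'' γ'' = B θ θ → B γ'' (Pi.single a 1) = 0 := by
      rw [hS, Finset.mem_filter] at ha
      exact ha.2
    have h0' := hLB i γ hγ hγL (Pi.single a 1) haS
    rw [hreflval _ γ (Pi.single a 1)] at h0'
    rw [haS γ hγ hγL, ← hc] at h0'
    have : B (Pi.single i 1) (Pi.single a 1) = 0 := by
      rcases mul_eq_zero.mp (by linarith : c * B (Pi.single i 1) (Pi.single a 1) = 0) with h | h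
      · exact absurd h hcne
      · exact h
    rw [hsymm] at this
    exact this
  -- S must be empty since θ has full support
  have hSempty : ∀ a, a ∉ S := by
    intro a ha
    set θS : ι → ℤ := fun j => if j ∈ S then θ j else 0 with hθS
    set θR : ι → ℤ := fun j => if j ∈ S then 0 else θ j with hθR
    have hθsplit : θ = θS + θR := by
      funext j
      simp only [Pi.add_apply, hθS, hθR]
      by_cases h : j ∈ S <;> simp [h]
    have hθSi : ∀ i ∈ S, B θS (Pi.single i 1) = 0 := by
      intro i hi
      have hθi : B θ (Pi.single i 1) = 0 := by
        rw [hS, Finset.mem_filter] at hi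
        exact hi.2 θ hθ rfl
      have hθRi : B θR (Pi.single i 1) = 0 := by
        rw [form_decomp B hsymm haddl hsmull]
        refine Finset.sum_eq_zero fun j _ => ?_
        by_cases hj : j ∈ S
        · simp [hθR, hj]
        · rw [hsymm, hSstep j hj i hi, mul_zero]
      have : B θ (Pi.single i 1) = B θS (Pi.single i 1) + B θR (Pi.single i 1) := by
        rw [hθsplit, haddl]
      rw [hθi, hθRi] at this
      omega
    have hθSS : B θS θS = 0 := by
      rw [form_decomp B hsymm haddl hsmull]
      refine Finset.sum_eq_zero fun i _ => ?_
      by_cases hi : i ∈ S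
      · rw [hsymm, hθSi i hi, mul_zero]
      · simp [hθS, hi]
    have hθSne : θS ≠ 0 := by
      intro h
      have := congrFun h a
      simp only [hθS, if_pos ha, Pi.zero_apply] at this
      have := hθ1 a
      omega
    have := hposd θS hθSne
    omega
  -- conclude B β β = 0, contradiction
  have hβe : ∀ i, B β (Pi.single i 1) = 0 := by
    intro i
    have hi := hSempty i
    rw [hS, Finset.mem_filter] at hi
    push_neg at hi
    obtain ⟨γ, hγ, hγL, hBγi⟩ := hi (Finset.mem_univ i)
    set c : ℤ := pairing C γ (coroot (Pi.single i 1)) with hc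
    have hcB : c * B (Pi.single i 1) (Pi.single i 1) = 2 * B γ (Pi.single i 1) :=
      key1 (Pi.single i 1) (hsimple i) γ
    set u : ι → ℤ := refl C coroot (Pi.single i 1) γ with hudef
    have huβ : B u β = 0 :=
      hLB i γ hγ hγL β (fun γ'' h1 h2 => hperp γ'' h1 h2)
    set p : ℤ := pairing C β (coroot (Pi.single i 1)) with hp
    -- B u (refl_i β) = B γ β = 0 by invariance
    have hinv2 : B u (refl C coroot (Pi.single i 1) β) = B γ β := by
      rw [hudef]
      exact hinv _ (hsimple i) γ β
    have hexp : B u (refl C coroot (Pi.single i 1) β)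
        = B u β - p * B u (Pi.single i 1) := by
      calc B u (refl C coroot (Pi.single i 1) β)
          = B (refl C coroot (Pi.single i 1) β) u := hsymm _ _
        _ = B β u - p * B (Pi.single i 1) u := by rw [hreflval _ β u, ← hp]
        _ = B u β - p * B u (Pi.single i 1) := by
            rw [hsymm β u, hsymm (Pi.single i 1) u]
    have hγβ : B γ β = 0 := hperp γ hγ hγL
    have hBui : B u (Pi.single i 1) = -(B γ (Pi.single i 1)) := by
      rw [hudef, hreflval _ γ (Pi.single i 1), ← hc]
      linarith [hcB]
    have hpzero : p = 0 := by
      rw [hγβ] at hinv2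
      rw [hexp, huβ, hBui] at hinv2
      rcases mul_eq_zero.mp (by linarith : p * -(B γ (Pi.single i 1)) = 0) with h | h
      · exact h
      · exfalso; exact hBγi (by omega)
    have hkey := key1 (Pi.single i 1) (hsimple i) β
    rw [← hp, hpzero] at hkey
    omega
  have hββ : B β β = 0 := by
    rw [form_decomp B hsymm haddl hsmull]
    refine Finset.sum_eq_zero fun i _ => ?_
    rw [hsymm, hβe i, mul_zero]
  have := hTpos β hβ
  omega

end Aux

/-- Let `Δ⁺` be the positive roots of a finite-dimensional simple Lie algebra `𝔤`,
written in simple-root coordinates, with coroots written in simple-coroot coordinates,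
Cartan pairing `C i j = ⟨α_i, α_j^∨⟩`, and highest root `θ`.  The length of the
reflection `s_β` is `ℓ(s_β) = |{γ ∈ Δ⁺ ∣ s_β γ ∉ Δ⁺}|`, and `2⟨ρ, β^∨⟩ = ∑_{γ ∈ Δ⁺}
⟨γ, β^∨⟩`.  If `β` is a quantum root, i.e. `ℓ(s_β) = 2⟨ρ, β^∨⟩ - 1`, then
`θ^∨ - β^∨` is a nonnegative integer combination of the simple coroots. -/
theorem quantum_root_coroot_le_highest
    (C : ι → ι → ℤ) (hC : ∀ i, C i i = 2)
    (Δp : Finset (ι → ℤ))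
    (hpos : ∀ v ∈ Δp, ∀ i, 0 ≤ v i)
    (hsimple : ∀ i, (Pi.single i 1 : ι → ℤ) ∈ Δp)
    (coroot : (ι → ℤ) → (ι → ℤ))
    (hcoroot2 : ∀ β ∈ Δp, pairing C β (coroot β) = 2)
    (hcoroot_simple : ∀ i, coroot (Pi.single i 1) = Pi.single i 1)
    (hrefl : ∀ β ∈ Δp, ∀ γ ∈ Δp, refl C coroot β γ ∈ Δp ∨ -refl C coroot β γ ∈ Δp)
    (θ : ι → ℤ) (hθ : θ ∈ Δp) (hθhigh : ∀ α ∈ Δp, ∀ i, α i ≤ θ i)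
    (β : ι → ℤ) (hβ : β ∈ Δp)
    (hquantum : ((Δp.filter (fun γ => refl C coroot β γ ∉ Δp)).card : ℤ) =
      (∑ γ ∈ Δp, pairing C γ (coroot β)) - 1) :
    ∀ i, 0 ≤ coroot θ i - coroot β i := by
  classical
  obtain ⟨B, hsymm, haddl, hsmull, hposd, hinv⟩ :=
    exists_form C coroot Δp hsimple hcoroot2 hrefl
  have key1 := form_pairing C coroot Δp hcoroot2 B hsymm haddl hsmull hinv
  have key2 := form_coord C coroot Δp hsimple hcoroot2 hcoroot_simple B hsymm haddl hsmull
    hposd hinv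
  have h0 : (0 : ι → ℤ) ∉ Δp := by
    intro h
    have h2' := hcoroot2 0 h
    rw [pairing_zero_left] at h2'
    omega
  have hTpos : ∀ δ ∈ Δp, 0 < B δ δ := fun δ hδ => hposd δ (fun h => h0 (h ▸ hδ))
  have hbjj : ∀ j, (0:ℤ) < B (Pi.single j 1) (Pi.single j 1) :=
    fun j => hTpos _ (hsimple j)
  have hθ1 : ∀ j, 1 ≤ θ j := by
    intro j
    have := hθhigh _ (hsimple j) j
    simpa using this
  have hcnonneg : ∀ δ ∈ Δp, ∀ j, 0 ≤ coroot δ j := by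
    intro δ hδ j
    have hk := key2 δ hδ j
    have h1 := hpos δ hδ j
    have h2 := hbjj j
    have h3 := hTpos δ hδ
    nlinarith
  intro j
  rcases le_or_gt (B θ θ) (B β β) with hcase | hcase
  · -- β is at least as long as θ
    have h1 := key2 θ hθ j
    have h2 := key2 β hβ j
    have hθj := hθhigh β hβ j
    have hβj := hpos β hβ j
    have hTθ := hTpos θ hθ
    have hTβ := hTpos β hβ
    have hbj := hbjj j
    have hmul : coroot β j * (B β β * B θ θ) ≤ coroot θ j * (B β β * B θ θ) := by
      calc coroot β j * (B β β * B θ θ) = (coroot β j * B β β) * B θ θ := by ring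
        _ = (β j * B (Pi.single j 1) (Pi.single j 1)) * B θ θ := by rw [h2]
        _ ≤ (θ j * B (Pi.single j 1) (Pi.single j 1)) * B β β := by
            nlinarith [mul_le_mul hθj hcase (le_of_lt hTθ) (by omega : (0:ℤ) ≤ θ j)]
        _ = (coroot θ j * B θ θ) * B β β := by rw [h1]
        _ = coroot θ j * (B β β * B θ θ) := by ring
    have hposTT : (0:ℤ) < B β β * B θ θ := mul_pos hTβ hTθ
    have := le_of_mul_le_mul_right hmul hposTT
    omega
  · -- β is strictly shorter than θ
    obtain ⟨γ, hγ, hγlen, hγB⟩ :=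
      exists_same_length C coroot Δp hpos hsimple hcoroot2 hcoroot_simple hrefl θ hθ hθ1 β hβ
        B hsymm haddl hsmull hposd hinv
    have hTθ := hTpos θ hθ
    have hTβ := hTpos β hβ
    -- q = ⟨β, γ^∨⟩ ≥ 1
    set q : ℤ := pairing C β (coroot γ) with hq
    have hqB : q * B γ γ = 2 * B β γ := key1 γ hγ β
    have hβγ : B β γ = B γ β := hsymm β γ
    have hq1 : 1 ≤ q := by
      rw [hγlen] at hqB
      nlinarith
    -- p = ⟨γ, β^∨⟩ ≥ 2
    set p : ℤ := pairing C γ (coroot β) with hp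
    have hpB : p * B β β = 2 * B γ β := key1 β hβ γ
    have hpq : p * B β β = q * B γ γ := by
      rw [hpB, hqB, hβγ]
    have hp2 : 2 ≤ p := by
      have hlt : 1 * B β β < p * B β β := by
        rw [hpq, hγlen]
        nlinarith
      have := lt_of_mul_lt_mul_right hlt (le_of_lt hTβ)
      omega
    have hne : γ ≠ β := by
      intro h
      rw [h] at hγlen
      omega
    -- quantum condition: the reflection of γ stays positive
    have hx : refl C coroot β γ ∈ Δp :=
      quantum_closed C coroot Δp hpos hcoroot2 hrefl β hβ hquantum γ hγ hne (by omega)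
    set x : ι → ℤ := refl C coroot β γ with hxdef
    have hTx : B x x = B θ θ := by
      rw [hxdef, hinv β hβ γ γ, hγlen]
    -- coordinate identity: coroot x j = coroot γ j - q * coroot β j
    have hxj : x j = γ j - p * β j := rfl
    have hkx := key2 x hx j
    have hkγ := key2 γ hγ j
    have hkβ := key2 β hβ j
    have hcoordeq : coroot x j * B θ θ = (coroot γ j - q * coroot β j) * B θ θ := by
      calc coroot x j * B θ θ = coroot x j * B x x := by rw [hTx]
        _ = x j * B (Pi.single j 1) (Pi.single j 1) := hkx
        _ = γ j * B (Pi.single j 1) (Pi.single j 1)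
            - p * (β j * B (Pi.single j 1) (Pi.single j 1)) := by rw [hxj]; ring
        _ = coroot γ j * B γ γ - p * (coroot β j * B β β) := by rw [hkγ, hkβ]
        _ = coroot γ j * B γ γ - (p * B β β) * coroot β j := by ring
        _ = coroot γ j * B γ γ - (q * B γ γ) * coroot β j := by rw [hpq]
        _ = (coroot γ j - q * coroot β j) * B θ θ := by rw [hγlen]; ring
    have hcoord : coroot x j = coroot γ j - q * coroot β j :=
      mul_right_cancel₀ (ne_of_gt hTθ) hcoordeq
    have hxnn := hcnonneg x hx j
    have hβnn := hcnonneg β hβ j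
    have hβγc : coroot β j ≤ coroot γ j := by nlinarith
    have hγθc : coroot γ j ≤ coroot θ j := by
      have hkθ := key2 θ hθ j
      have hγθj := hθhigh γ hγ j
      have hbj := hbjj j
      have hstep : coroot γ j * B θ θ ≤ coroot θ j * B θ θ := by
        calc coroot γ j * B θ θ = coroot γ j * B γ γ := by rw [hγlen]
          _ = γ j * B (Pi.single j 1) (Pi.single j 1) := hkγ
          _ ≤ θ j * B (Pi.single j 1) (Pi.single j 1) := by nlinarith
          _ = coroot θ j * B θ θ := hkθ.symm
      exact le_of_mul_le_mul_right hstep hTθ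
    omega

end Stmt13
end

section
/- Let $W$ be a finite Weyl group with quantum Bruhat graph $\mathrm{QBG}(W)$. For $v, w_1, w_2 \in W$ define $w_1 \le_v w_2$ iff $\ell(v \Rightarrow w_2) = \ell(v \Rightarrow w_1) + \ell(w_1 \Rightarrow w_2)$, where $\ell(x \Rightarrow y)$ is the length of a shortest directed path from $x$ to $y$ in $\mathrm{QBG}(W)$. Then $\le_v$ is a partial order on $W$ (reflexive, antisymmetric, transitive). -/
namespace Stmt16

/-- Data of the quantum Bruhat graph of a finite Weyl group `W`. -/
structure QBGData (W : Type*) [Group W] where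
  Pos : Type*
  refl : Pos → W
  len : W → ℕ
  rhoPair : Pos → ℕ
  rhoPair_pos : ∀ α, 1 ≤ rhoPair α

variable {W : Type*} [Group W] (d : QBGData W)

/-- An edge `x → y = x s_α` of `QBG(W)`: either a Bruhat edge (`ℓ(y) = ℓ(x)+1`) or a
quantum edge (`ℓ(y) = ℓ(x)+1-2⟨ρ,α^∨⟩`). -/
def Edge (x y : W) : Prop :=
  ∃ α, y = x * d.refl α ∧
    (d.len y = d.len x + 1 ∨ d.len y + 2 * d.rhoPair α = d.len x + 1)

/-- Directed paths in `QBG(W)`, recorded by their list of successive vertices. -/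
def IsPath (v : W) (p : List W) (w : W) : Prop :=
  List.Chain (Edge d) v p ∧ (v :: p).getLast (List.cons_ne_nil v p) = w

/-- `ℓ(x ⇒ y)`: the length of a shortest directed path from `x` to `y` in `QBG(W)`. -/
noncomputable def dist (x y : W) : ℕ :=
  sInf {k | ∃ p : List W, IsPath d x p y ∧ p.length = k}

/-- The `v`-tilted Bruhat order: `w₁ ≤_v w₂` iff
`ℓ(v ⇒ w₂) = ℓ(v ⇒ w₁) + ℓ(w₁ ⇒ w₂)`. -/
def tiltedLE (v w₁ w₂ : W) : Prop :=
  dist d v w₂ = dist d v w₁ + dist d w₁ w₂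

lemma isPath_append {x y z : W} {p q : List W} (hp : IsPath d x p y)
    (hq : IsPath d y q z) : IsPath d x (p ++ q) z := by
  induction p generalizing x with
  | nil =>
    obtain ⟨_, h⟩ := hp
    simp only [List.getLast_singleton] at h
    subst h
    simpa using hq
  | cons a p ih =>
    obtain ⟨hc, hl⟩ := hp
    rw [List.Chain, List.chain_cons] at hc
    have : IsPath d a p y := ⟨hc.2, by rw [← hl]; exact (List.getLast_cons _).symm⟩
    obtain ⟨hc', hl'⟩ := ih this
    refine ⟨List.chain_cons.mpr ⟨hc.1, hc'⟩, ?_⟩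
    rw [← hl']
    exact List.getLast_cons _

lemma dist_le {x y : W} {p : List W} (hp : IsPath d x p y) : dist d x y ≤ p.length :=
  Nat.sInf_le ⟨p, hp, rfl⟩

lemma dist_self (x : W) : dist d x x = 0 :=
  Nat.le_zero.mp (dist_le d (⟨List.Chain.nil, rfl⟩ : IsPath d x [] x))

lemma dist_spec (hconn : ∀ x y : W, ∃ p : List W, IsPath d x p y) (x y : W) :
    ∃ p : List W, IsPath d x p y ∧ p.length = dist d x y := by
  have hne : {k | ∃ p : List W, IsPath d x p y ∧ p.length = k}.Nonempty := by
    obtain ⟨p, hp⟩ := hconn x y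
    exact ⟨p.length, p, hp, rfl⟩
  exact Nat.sInf_mem hne

lemma eq_of_dist_eq_zero (hconn : ∀ x y : W, ∃ p : List W, IsPath d x p y)
    {x y : W} (h : dist d x y = 0) : x = y := by
  obtain ⟨p, hp, hl⟩ := dist_spec d hconn x y
  rw [h, List.length_eq_zero_iff] at hl
  subst hl
  simpa [List.getLast_singleton] using hp.2

lemma dist_triangle (hconn : ∀ x y : W, ∃ p : List W, IsPath d x p y) (x y z : W) :
    dist d x z ≤ dist d x y + dist d y z := by
  obtain ⟨p, hp, hpl⟩ := dist_spec d hconn x y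
  obtain ⟨q, hq, hql⟩ := dist_spec d hconn y z
  calc dist d x z ≤ (p ++ q).length := dist_le d (isPath_append d hp hq)
    _ = dist d x y + dist d y z := by simp [hpl, hql]

/-- The tilted Bruhat order `≤_v` is a partial order on `W` (the quantum Bruhat graph
being strongly connected, by Postnikov). -/
theorem tiltedLE_partialOrder
    (hconn : ∀ x y : W, ∃ p : List W, IsPath d x p y) (v : W) :
    (∀ w, tiltedLE d v w w) ∧
    (∀ w₁ w₂, tiltedLE d v w₁ w₂ → tiltedLE d v w₂ w₁ → w₁ = w₂) ∧
    (∀ w₁ w₂ w₃, tiltedLE d v w₁ w₂ → tiltedLE d v w₂ w₃ → tiltedLE d v w₁ w₃) := by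
  refine ⟨fun w => ?_, fun w₁ w₂ h12 h21 => ?_, fun w₁ w₂ w₃ h12 h23 => ?_⟩
  · unfold tiltedLE
    rw [dist_self, Nat.add_zero]
  · unfold tiltedLE at h12 h21
    have h0 : dist d w₁ w₂ = 0 := by omega
    exact eq_of_dist_eq_zero d hconn h0
  · unfold tiltedLE at *
    have t1 := dist_triangle d hconn v w₁ w₃
    have t2 := dist_triangle d hconn w₁ w₂ w₃
    omega

end Stmt16
end
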